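/- arXiv:2301.00898 — 3 statements merged into one kernel-verified Lean document; each statement's English description precedes it below -/
import Mathlib

section
/- Let n ≥ 3, let λ be a partition of n, and let C_λ be the conjugacy class of S_n of permutations of cycle type λ. Fix i < j in {1,…,n}. Define Ω_1 = {ω ∈ C_λ : ω(i) ∉ {i,j} and ω(j) ∉ {i,j}}, Ω_4 = {ω ∈ C_λ : ω(i)=j, ω(j)≠i} ∪ {ω ∈ C_λ : ω(j)=i, ω(i)≠j}, and Ω_5 = {ω ∈ C_λ : ω(i)=i, ω(j)≠j} ∪ {ω ∈ C_λ : ω(j)=j, ω(i)≠i}. Then: (1) #{ω ∈ Ω_1 : ω(i) > ω(j)} = #{ω ∈ Ω_1 : ω(i) < ω(j)}; (2) 2(n−2)·#{ω ∈ Ω_4 : ω(i) > ω(j)} = ((n−2)+(j−i−1))·|Ω_4|; (3) 2(n−2)·#{ω ∈ Ω_5 : ω(i) > ω(j)} = ((n−2)−(j−i−1))·|Ω_5|. -/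
noncomputable def conjClass (n : ℕ) (lam : n.Partition) : Finset (Equiv.Perm (Fin n)) :=
  Finset.univ.filter fun ω => ω.cycleType = Multiset.filter (fun i => i ≠ 1) lam.parts

lemma conj_filter_card (n : ℕ) (lam : n.Partition) (σ : Equiv.Perm (Fin n))
    (P Q : Equiv.Perm (Fin n) → Prop) [DecidablePred P] [DecidablePred Q]
    (h : ∀ ω, P ω ↔ Q (σ * ω * σ⁻¹)) :
    ((conjClass n lam).filter P).card = ((conjClass n lam).filter Q).card := by
  apply Finset.card_bij' (fun ω _ => σ * ω * σ⁻¹) (fun ω _ => σ⁻¹ * ω * σ)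
  · intro ω hω
    simp only [conjClass, Finset.mem_filter, Finset.mem_univ, true_and] at hω ⊢
    exact ⟨by rw [Equiv.Perm.cycleType_conj, hω.1], (h ω).mp hω.2⟩
  · intro ω hω
    simp only [conjClass, Finset.mem_filter, Finset.mem_univ, true_and] at hω ⊢
    refine ⟨by rw [show σ⁻¹ * ω * σ = σ⁻¹ * ω * σ⁻¹⁻¹ by group, Equiv.Perm.cycleType_conj, hω.1], ?_⟩
    have h2 := h (σ⁻¹ * ω * σ)
    rw [show σ * (σ⁻¹ * ω * σ) * σ⁻¹ = ω by group] at h2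
    exact h2.mpr hω.2
  · intro ω _; group
  · intro ω _; group

lemma conj_pair (n : ℕ) (lam : n.Partition) (τ : Equiv.Perm (Fin n))
    (p v q c p' v' q' c' : Fin n)
    (hp : τ p = p') (hv : τ v = v') (hq : τ q = q') (hc : τ c = c') :
    ((conjClass n lam).filter fun ω => ω p = v ∧ ω q = c).card
      = ((conjClass n lam).filter fun ω => ω p' = v' ∧ ω q' = c').card := by
  apply conj_filter_card n lam τ
  intro ω
  have h1 : (τ * ω * τ⁻¹) p' = τ (ω p) := by
    simp [Equiv.Perm.mul_apply, ← hp]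
  have h2 : (τ * ω * τ⁻¹) q' = τ (ω q) := by
    simp [Equiv.Perm.mul_apply, ← hq]
  rw [h1, h2, ← hv, ← hc]
  exact and_congr (Equiv.apply_eq_iff_eq τ).symm (Equiv.apply_eq_iff_eq τ).symm

lemma count_filter (n : ℕ) (lam : n.Partition) (p q v e : Fin n) (hpq : p ≠ q)
    (hv : v = p ∨ v = q) (he : e = p ∨ e = q) (hve : v ≠ e)
    (R : Fin n → Prop) [DecidablePred R] (m : ℕ)
    (hm : ∀ c : Fin n, c ≠ p → c ≠ q →
      ((conjClass n lam).filter fun ω => ω p = v ∧ ω q = c).card = m) :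
    ((conjClass n lam).filter fun ω => (ω p = v ∧ ω q ≠ e) ∧ R (ω q)).card
      = (Finset.univ.filter fun c => (c ≠ p ∧ c ≠ q) ∧ R c).card * m := by
  rw [Finset.card_eq_sum_card_fiberwise
      (f := fun ω => ω q) (t := Finset.univ.filter fun c => (c ≠ p ∧ c ≠ q) ∧ R c) ?_]
  · rw [Finset.sum_congr rfl (g := fun _ => m) ?_, Finset.sum_const, smul_eq_mul]
    intro c hc
    simp only [Finset.mem_filter, Finset.mem_univ, true_and] at hc
    obtain ⟨⟨hcp, hcq⟩, hR⟩ := hc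
    rw [← hm c hcp hcq]
    congr 1
    ext ω
    simp only [Finset.mem_filter]
    constructor
    · rintro ⟨⟨hC, ⟨h1, _⟩, _⟩, h4⟩
      exact ⟨hC, h1, h4⟩
    · rintro ⟨hC, h1, h2⟩
      have hce : c ≠ e := by rcases he with rfl | rfl; exact hcp; exact hcq
      exact ⟨⟨hC, ⟨h1, by rw [h2]; exact hce⟩, by rw [h2]; exact hR⟩, h2⟩
  · intro ω hω
    simp only [Finset.mem_coe, Finset.mem_filter, Finset.mem_univ, true_and] at hω ⊢
    obtain ⟨_, ⟨h1, h2⟩, h3⟩ := hω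
    have hqv : ω q ≠ v := fun h => hpq (ω.injective (by rw [h1, h])).symm
    refine ⟨⟨?_, ?_⟩, h3⟩
    · rcases hv with rfl | rfl
      · exact hqv
      · rcases he with rfl | rfl
        · exact h2
        · exact absurd rfl hve
    · rcases hv with rfl | rfl
      · rcases he with rfl | rfl
        · exact absurd rfl hve
        · exact h2
      · exact hqv

theorem stmt1 (n : ℕ) (hn : 3 ≤ n) (lam : n.Partition) (i j : Fin n) (hij : i < j)
    (Ω1 Ω4 Ω5 : Finset (Equiv.Perm (Fin n)))
    (hΩ1 : Ω1 = (conjClass n lam).filter fun ω =>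
      ω i ≠ i ∧ ω i ≠ j ∧ ω j ≠ i ∧ ω j ≠ j)
    (hΩ4 : Ω4 = (conjClass n lam).filter fun ω =>
      (ω i = j ∧ ω j ≠ i) ∨ (ω j = i ∧ ω i ≠ j))
    (hΩ5 : Ω5 = (conjClass n lam).filter fun ω =>
      (ω i = i ∧ ω j ≠ j) ∨ (ω j = j ∧ ω i ≠ i)) :
    (Ω1.filter fun ω => ω j < ω i).card = (Ω1.filter fun ω => ω i < ω j).card ∧
    2 * (n - 2) * (Ω4.filter fun ω => ω j < ω i).card
      = ((n - 2) + ((j : ℕ) - (i : ℕ) - 1)) * Ω4.card ∧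
    2 * (n - 2) * (Ω5.filter fun ω => ω j < ω i).card
      = ((n - 2) - ((j : ℕ) - (i : ℕ) - 1)) * Ω5.card := by
  have hijne : i ≠ j := hij.ne
  have hin : (i : ℕ) < (j : ℕ) := hij
  have hjn : (j : ℕ) < n := j.isLt
  set τ : Equiv.Perm (Fin n) := Equiv.swap i j with hτ
  have e1 : ∀ ω : Equiv.Perm (Fin n), (τ * ω * τ⁻¹) i = τ (ω j) := by
    intro ω
    simp [Equiv.Perm.mul_apply, Equiv.swap_inv, Equiv.swap_apply_left, hτ]
  have e2 : ∀ ω : Equiv.Perm (Fin n), (τ * ω * τ⁻¹) j = τ (ω i) := by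
    intro ω
    simp [Equiv.Perm.mul_apply, Equiv.swap_inv, Equiv.swap_apply_right, hτ]
  -- choose c₀ outside {i, j}
  have hne : (({i, j} : Finset (Fin n))ᶜ).Nonempty := by
    rw [← Finset.card_pos, Finset.card_compl, Finset.card_pair hijne, Fintype.card_fin]
    omega
  obtain ⟨c₀, hc₀⟩ := hne
  simp only [Finset.mem_compl, Finset.mem_insert, Finset.mem_singleton, not_or] at hc₀
  obtain ⟨hc₀i, hc₀j⟩ := hc₀
  refine ⟨?_, ?_, ?_⟩
  · -- Part 1
    subst hΩ1
    rw [Finset.filter_filter, Finset.filter_filter]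
    apply conj_filter_card n lam τ
    intro ω
    constructor
    · rintro ⟨⟨h1, h2, h3, h4⟩, h5⟩
      rw [e1, e2, Equiv.swap_apply_of_ne_of_ne h3 h4, Equiv.swap_apply_of_ne_of_ne h1 h2]
      exact ⟨⟨h3, h4, h1, h2⟩, h5⟩
    · rintro ⟨⟨g1, g2, g3, g4⟩, g5⟩
      rw [e1] at g1 g2
      rw [e2] at g3 g4
      rw [e1, e2] at g5
      have hj1 : ω j ≠ i := fun h => g2 (by rw [h]; exact Equiv.swap_apply_left i j)
      have hj2 : ω j ≠ j := fun h => g1 (by rw [h]; exact Equiv.swap_apply_right i j)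
      have hi1 : ω i ≠ i := fun h => g4 (by rw [h]; exact Equiv.swap_apply_left i j)
      have hi2 : ω i ≠ j := fun h => g3 (by rw [h]; exact Equiv.swap_apply_right i j)
      rw [Equiv.swap_apply_of_ne_of_ne hj1 hj2, Equiv.swap_apply_of_ne_of_ne hi1 hi2] at g5
      exact ⟨⟨hi1, hi2, hj1, hj2⟩, g5⟩
  · -- Part 2 : Ω4
    set m4 := ((conjClass n lam).filter fun ω => ω i = j ∧ ω j = c₀).card with hm4
    have ha4 : ∀ c : Fin n, c ≠ i → c ≠ j →
        ((conjClass n lam).filter fun ω => ω i = j ∧ ω j = c).card = m4 := by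
      intro c hci hcj
      exact conj_pair n lam (Equiv.swap c c₀) i j j c i j j c₀
        (Equiv.swap_apply_of_ne_of_ne (Ne.symm hci) (Ne.symm hc₀i))
        (Equiv.swap_apply_of_ne_of_ne (Ne.symm hcj) (Ne.symm hc₀j))
        (Equiv.swap_apply_of_ne_of_ne (Ne.symm hcj) (Ne.symm hc₀j))
        (Equiv.swap_apply_left c c₀)
    have hb4 : ∀ c : Fin n, c ≠ j → c ≠ i →
        ((conjClass n lam).filter fun ω => ω j = i ∧ ω i = c).card = m4 := by
      intro c hcj hci
      refine (conj_pair n lam τ j i i c i j j c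
        (Equiv.swap_apply_right i j) (Equiv.swap_apply_left i j)
        (Equiv.swap_apply_left i j)
        (Equiv.swap_apply_of_ne_of_ne hci hcj)).trans (ha4 c hci hcj)
    have hdisj : Disjoint ((conjClass n lam).filter fun ω => (ω i = j ∧ ω j ≠ i) ∧ ω j < j)
        ((conjClass n lam).filter fun ω => (ω j = i ∧ ω i ≠ j) ∧ i < ω i) := by
      rw [Finset.disjoint_left]
      intro ω h1 h2
      simp only [Finset.mem_filter] at h1 h2
      exact h1.2.1.2 h2.2.1.1
    have hdisj' : Disjoint ((conjClass n lam).filter fun ω => (ω i = j ∧ ω j ≠ i) ∧ True)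
        ((conjClass n lam).filter fun ω => (ω j = i ∧ ω i ≠ j) ∧ True) := by
      rw [Finset.disjoint_left]
      intro ω h1 h2
      simp only [Finset.mem_filter] at h1 h2
      exact h1.2.1.2 h2.2.1.1
    have hsplit : Ω4 = ((conjClass n lam).filter fun ω => (ω i = j ∧ ω j ≠ i) ∧ True)
        ∪ ((conjClass n lam).filter fun ω => (ω j = i ∧ ω i ≠ j) ∧ True) := by
      rw [hΩ4, ← Finset.filter_or]
      apply Finset.filter_congr
      intro ω _
      simp
    have hsplitinv : Ω4.filter (fun ω => ω j < ω i)
        = ((conjClass n lam).filter fun ω => (ω i = j ∧ ω j ≠ i) ∧ ω j < j)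
        ∪ ((conjClass n lam).filter fun ω => (ω j = i ∧ ω i ≠ j) ∧ i < ω i) := by
      rw [hΩ4, Finset.filter_filter, ← Finset.filter_or]
      apply Finset.filter_congr
      intro ω _
      constructor
      · rintro ⟨h1 | h1, h2⟩
        · exact Or.inl ⟨h1, by rw [h1.1] at h2; exact h2⟩
        · exact Or.inr ⟨h1, by rw [h1.1] at h2; exact h2⟩
      · rintro (⟨h1, h2⟩ | ⟨h1, h2⟩)
        · exact ⟨Or.inl h1, by rw [h1.1]; exact h2⟩
        · exact ⟨Or.inr h1, by rw [h1.1]; exact h2⟩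
    have cardA : ((conjClass n lam).filter fun ω => (ω i = j ∧ ω j ≠ i) ∧ True).card = (n - 2) * m4 := by
      rw [count_filter n lam i j j i hijne (Or.inr rfl) (Or.inl rfl) hij.ne' (fun _ => True) m4 ha4]
      congr 1
      have : (Finset.univ.filter fun c : Fin n => (c ≠ i ∧ c ≠ j) ∧ True)
          = ({i, j} : Finset (Fin n))ᶜ := by
        ext c; simp [not_or]
      rw [this, Finset.card_compl, Finset.card_pair hijne, Fintype.card_fin]
    have cardB : ((conjClass n lam).filter fun ω => (ω j = i ∧ ω i ≠ j) ∧ True).card = (n - 2) * m4 := by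
      rw [count_filter n lam j i i j hijne.symm (Or.inr rfl) (Or.inl rfl) hij.ne (fun _ => True) m4 hb4]
      congr 1
      have : (Finset.univ.filter fun c : Fin n => (c ≠ j ∧ c ≠ i) ∧ True)
          = ({i, j} : Finset (Fin n))ᶜ := by
        ext c; simp [not_or, and_comm]
      rw [this, Finset.card_compl, Finset.card_pair hijne, Fintype.card_fin]
    have cardAinv : ((conjClass n lam).filter fun ω => (ω i = j ∧ ω j ≠ i) ∧ ω j < j).card
        = ((j : ℕ) - 1) * m4 := by
      rw [count_filter n lam i j j i hijne (Or.inr rfl) (Or.inl rfl) hij.ne' (fun c => c < j) m4 ha4]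
      congr 1
      have : (Finset.univ.filter fun c : Fin n => (c ≠ i ∧ c ≠ j) ∧ c < j)
          = (Finset.Iio j).erase i := by
        ext c
        simp only [Finset.mem_filter, Finset.mem_univ, true_and, Finset.mem_erase,
          Finset.mem_Iio]
        constructor
        · rintro ⟨⟨h1, _⟩, h3⟩; exact ⟨h1, h3⟩
        · rintro ⟨h1, h2⟩; exact ⟨⟨h1, h2.ne⟩, h2⟩
      rw [this, Finset.card_erase_of_mem (by simpa using hij), Fin.card_Iio]
    have cardBinv : ((conjClass n lam).filter fun ω => (ω j = i ∧ ω i ≠ j) ∧ i < ω i).card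
        = (n - 1 - (i : ℕ) - 1) * m4 := by
      rw [count_filter n lam j i i j hijne.symm (Or.inr rfl) (Or.inl rfl) hij.ne (fun c => i < c) m4 hb4]
      congr 1
      have : (Finset.univ.filter fun c : Fin n => (c ≠ j ∧ c ≠ i) ∧ i < c)
          = (Finset.Ioi i).erase j := by
        ext c
        simp only [Finset.mem_filter, Finset.mem_univ, true_and, Finset.mem_erase,
          Finset.mem_Ioi]
        constructor
        · rintro ⟨⟨h1, _⟩, h3⟩; exact ⟨h1, h3⟩
        · rintro ⟨h1, h2⟩; exact ⟨⟨h1, h2.ne'⟩, h2⟩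
      rw [this, Finset.card_erase_of_mem (by simpa using hij), Fin.card_Ioi]
    rw [hsplitinv, Finset.card_union_of_disjoint hdisj, cardAinv, cardBinv,
      hsplit, Finset.card_union_of_disjoint hdisj', cardA, cardB]
    have harith : ((j : ℕ) - 1) + (n - 1 - (i : ℕ) - 1) = (n - 2) + ((j : ℕ) - (i : ℕ) - 1) := by
      omega
    calc 2 * (n - 2) * (((j : ℕ) - 1) * m4 + (n - 1 - (i : ℕ) - 1) * m4)
        = (((j : ℕ) - 1) + (n - 1 - (i : ℕ) - 1)) * (2 * ((n - 2) * m4)) := by ring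
      _ = ((n - 2) + ((j : ℕ) - (i : ℕ) - 1)) * ((n - 2) * m4 + (n - 2) * m4) := by
          rw [harith]; ring
  · -- Part 3 : Ω5
    set m5 := ((conjClass n lam).filter fun ω => ω i = i ∧ ω j = c₀).card with hm5
    have ha5 : ∀ c : Fin n, c ≠ i → c ≠ j →
        ((conjClass n lam).filter fun ω => ω i = i ∧ ω j = c).card = m5 := by
      intro c hci hcj
      exact conj_pair n lam (Equiv.swap c c₀) i i j c i i j c₀
        (Equiv.swap_apply_of_ne_of_ne (Ne.symm hci) (Ne.symm hc₀i))
        (Equiv.swap_apply_of_ne_of_ne (Ne.symm hci) (Ne.symm hc₀i))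
        (Equiv.swap_apply_of_ne_of_ne (Ne.symm hcj) (Ne.symm hc₀j))
        (Equiv.swap_apply_left c c₀)
    have hb5 : ∀ c : Fin n, c ≠ j → c ≠ i →
        ((conjClass n lam).filter fun ω => ω j = j ∧ ω i = c).card = m5 := by
      intro c hcj hci
      refine (conj_pair n lam τ j j i c i i j c
        (Equiv.swap_apply_right i j) (Equiv.swap_apply_right i j)
        (Equiv.swap_apply_left i j)
        (Equiv.swap_apply_of_ne_of_ne hci hcj)).trans (ha5 c hci hcj)
    have hdisj : Disjoint ((conjClass n lam).filter fun ω => (ω i = i ∧ ω j ≠ j) ∧ ω j < i)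
        ((conjClass n lam).filter fun ω => (ω j = j ∧ ω i ≠ i) ∧ j < ω i) := by
      rw [Finset.disjoint_left]
      intro ω h1 h2
      simp only [Finset.mem_filter] at h1 h2
      exact h2.2.1.2 h1.2.1.1
    have hdisj' : Disjoint ((conjClass n lam).filter fun ω => (ω i = i ∧ ω j ≠ j) ∧ True)
        ((conjClass n lam).filter fun ω => (ω j = j ∧ ω i ≠ i) ∧ True) := by
      rw [Finset.disjoint_left]
      intro ω h1 h2
      simp only [Finset.mem_filter] at h1 h2
      exact h2.2.1.2 h1.2.1.1
    have hsplit : Ω5 = ((conjClass n lam).filter fun ω => (ω i = i ∧ ω j ≠ j) ∧ True)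
        ∪ ((conjClass n lam).filter fun ω => (ω j = j ∧ ω i ≠ i) ∧ True) := by
      rw [hΩ5, ← Finset.filter_or]
      apply Finset.filter_congr
      intro ω _
      simp
    have hsplitinv : Ω5.filter (fun ω => ω j < ω i)
        = ((conjClass n lam).filter fun ω => (ω i = i ∧ ω j ≠ j) ∧ ω j < i)
        ∪ ((conjClass n lam).filter fun ω => (ω j = j ∧ ω i ≠ i) ∧ j < ω i) := by
      rw [hΩ5, Finset.filter_filter, ← Finset.filter_or]
      apply Finset.filter_congr
      intro ω _
      constructor
      · rintro ⟨h1 | h1, h2⟩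
        · exact Or.inl ⟨h1, by rw [h1.1] at h2; exact h2⟩
        · exact Or.inr ⟨h1, by rw [h1.1] at h2; exact h2⟩
      · rintro (⟨h1, h2⟩ | ⟨h1, h2⟩)
        · exact ⟨Or.inl h1, by rw [h1.1]; exact h2⟩
        · exact ⟨Or.inr h1, by rw [h1.1]; exact h2⟩
    have cardA : ((conjClass n lam).filter fun ω => (ω i = i ∧ ω j ≠ j) ∧ True).card = (n - 2) * m5 := by
      rw [count_filter n lam i j i j hijne (Or.inl rfl) (Or.inr rfl) hijne (fun _ => True) m5 ha5]
      congr 1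
      have : (Finset.univ.filter fun c : Fin n => (c ≠ i ∧ c ≠ j) ∧ True)
          = ({i, j} : Finset (Fin n))ᶜ := by
        ext c; simp [not_or]
      rw [this, Finset.card_compl, Finset.card_pair hijne, Fintype.card_fin]
    have cardB : ((conjClass n lam).filter fun ω => (ω j = j ∧ ω i ≠ i) ∧ True).card = (n - 2) * m5 := by
      rw [count_filter n lam j i j i hijne.symm (Or.inl rfl) (Or.inr rfl) hijne.symm (fun _ => True) m5 hb5]
      congr 1
      have : (Finset.univ.filter fun c : Fin n => (c ≠ j ∧ c ≠ i) ∧ True)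
          = ({i, j} : Finset (Fin n))ᶜ := by
        ext c; simp [not_or, and_comm]
      rw [this, Finset.card_compl, Finset.card_pair hijne, Fintype.card_fin]
    have cardAinv : ((conjClass n lam).filter fun ω => (ω i = i ∧ ω j ≠ j) ∧ ω j < i).card
        = (i : ℕ) * m5 := by
      rw [count_filter n lam i j i j hijne (Or.inl rfl) (Or.inr rfl) hijne (fun c => c < i) m5 ha5]
      congr 1
      have : (Finset.univ.filter fun c : Fin n => (c ≠ i ∧ c ≠ j) ∧ c < i)
          = Finset.Iio i := by
        ext c
        simp only [Finset.mem_filter, Finset.mem_univ, true_and, Finset.mem_Iio]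
        constructor
        · rintro ⟨_, h3⟩; exact h3
        · intro h; exact ⟨⟨h.ne, (h.trans hij).ne⟩, h⟩
      rw [this, Fin.card_Iio]
    have cardBinv : ((conjClass n lam).filter fun ω => (ω j = j ∧ ω i ≠ i) ∧ j < ω i).card
        = (n - 1 - (j : ℕ)) * m5 := by
      rw [count_filter n lam j i j i hijne.symm (Or.inl rfl) (Or.inr rfl) hijne.symm (fun c => j < c) m5 hb5]
      congr 1
      have : (Finset.univ.filter fun c : Fin n => (c ≠ j ∧ c ≠ i) ∧ j < c)
          = Finset.Ioi j := by
        ext c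
        simp only [Finset.mem_filter, Finset.mem_univ, true_and, Finset.mem_Ioi]
        constructor
        · rintro ⟨_, h3⟩; exact h3
        · intro h; exact ⟨⟨h.ne', (hij.trans h).ne'⟩, h⟩
      rw [this, Fin.card_Ioi]
    rw [hsplitinv, Finset.card_union_of_disjoint hdisj, cardAinv, cardBinv,
      hsplit, Finset.card_union_of_disjoint hdisj', cardA, cardB]
    have harith : (i : ℕ) + (n - 1 - (j : ℕ)) = (n - 2) - ((j : ℕ) - (i : ℕ) - 1) := by
      omega
    calc 2 * (n - 2) * ((i : ℕ) * m5 + (n - 1 - (j : ℕ)) * m5)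
        = ((i : ℕ) + (n - 1 - (j : ℕ))) * (2 * ((n - 2) * m5)) := by ring
      _ = ((n - 2) - ((j : ℕ) - (i : ℕ) - 1)) * ((n - 2) * m5 + (n - 2) * m5) := by
          rw [← harith]; ring
end

section
/- Let n ≥ 3 and let λ be a partition of n with a_k parts equal to k. For any i < j in {1,…,n}, the probability that a uniformly random permutation ω in the conjugacy class C_λ satisfies ω(i) > ω(j) equals 1/2 + a_2/(n(n−1)) − a_1(a_1−1)/(2n(n−1)) + (j−i−1)·(n − n·a_1 − a_1 + a_1² − 2a_2)/(n(n−1)(n−2)). -/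
open Equiv Equiv.Perm Finset

namespace Stmt2Aux


lemma fix_card' {n : ℕ} {lam : n.Partition} (ω : Perm (Fin n))
    (hω : ω.cycleType = Multiset.filter (fun i => i ≠ 1) lam.parts) :
    #(univ.filter fun x => ω x = x) = Multiset.count 1 lam.parts := by
  have h1 : #(univ.filter fun x : Fin n => ω x = x) + #ω.support = n := by
    have hs : ω.support = univ.filter fun x => ¬ ω x = x := by
      ext x; simp [Equiv.Perm.mem_support]
    rw [hs, Finset.card_filter_add_card_filter_not]
    simp
  have h2 : #ω.support + Multiset.count 1 lam.parts = n := by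
    rw [← Equiv.Perm.sum_cycleType, hω]
    have h0 := Multiset.sum_filter_add_sum_filter_not (s := lam.parts) (fun i => i ≠ 1)
    have h3 : Multiset.filter (fun i => ¬ i ≠ 1) lam.parts
        = Multiset.replicate (Multiset.count 1 lam.parts) 1 := by
      rw [← Multiset.filter_eq]
      congr 1
      ext x
      simp [eq_comm]
    rw [h3] at h0
    simp [Multiset.sum_replicate] at h0
    have := lam.parts_sum
    simp only [ne_eq]
    omega
  omega


lemma two_card0 {n : ℕ} (ω : Perm (Fin n)) :
    #(univ.filter fun x => ω x ≠ x ∧ ω (ω x) = x) = 2 * Multiset.count 2 ω.cycleType := by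
  classical
  set s := univ.filter fun x => ω x ≠ x ∧ ω (ω x) = x with hs
  set t := ω.cycleFactorsFinset.filter (fun c => #c.support = 2) with ht
  have hmap : ∀ x ∈ s, ω.cycleOf x ∈ t := by
    intro x hx
    simp only [hs, mem_filter, mem_univ, true_and] at hx
    obtain ⟨hx1, hx2⟩ := hx
    simp only [ht, mem_filter]
    constructor
    · exact (Equiv.Perm.cycleOf_mem_cycleFactorsFinset_iff).2 (by simp [Equiv.Perm.mem_support, hx1])
    · -- card support = 2
      have hc : (ω.cycleOf x).IsCycle := Equiv.Perm.isCycle_cycleOf ω hx1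
      have hsq : (ω.cycleOf x) ^ 2 = 1 := by
        rw [hc.pow_eq_one_iff]
        exact ⟨x, by simp [Equiv.Perm.cycleOf_apply_self, hx1,
          Equiv.Perm.cycleOf_pow_apply_self, pow_two, Equiv.Perm.mul_apply, hx2]⟩
      have ho : orderOf (ω.cycleOf x) = #(ω.cycleOf x).support := hc.orderOf
      have hdvd : orderOf (ω.cycleOf x) ∣ 2 := orderOf_dvd_of_pow_eq_one hsq
      have h2 : 2 ≤ #(ω.cycleOf x).support := hc.two_le_card_support
      have := Nat.le_of_dvd (by norm_num) hdvd
      omega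
  have hcard := Finset.card_eq_sum_card_fiberwise hmap
  have hfib : ∀ c ∈ t, (s.filter fun x => ω.cycleOf x = c) = c.support := by
    intro c hc
    simp only [ht, mem_filter] at hc
    obtain ⟨hcf, hc2⟩ := hc
    have hswap : c * c = 1 := by
      obtain ⟨a, b, hab, rfl⟩ := (Equiv.Perm.card_support_eq_two).1 hc2
      exact Equiv.swap_mul_self a b
    ext x
    simp only [mem_filter, hs, mem_univ, true_and]
    constructor
    · rintro ⟨⟨hx1, -⟩, rfl⟩
      exact Equiv.Perm.mem_support_cycleOf_iff.2 ⟨Equiv.Perm.SameCycle.refl _ _, by simp [Equiv.Perm.mem_support, hx1]⟩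
    · intro hxc
      have hceq : c = ω.cycleOf x := Equiv.Perm.cycle_is_cycleOf hxc hcf
      have happ := (Equiv.Perm.mem_cycleFactorsFinset_iff.1 hcf).2
      have hx1 : ω x = c x := (happ x hxc).symm
      have hcx : c x ≠ x := by
        have := Equiv.Perm.mem_support.1 hxc; exact this
      have hcxs : c x ∈ c.support := by
        rw [Equiv.Perm.apply_mem_support]; exact hxc
      have hx2 : ω (c x) = c (c x) := (happ _ hcxs).symm
      refine ⟨⟨by rw [hx1]; exact hcx, ?_⟩, hceq.symm⟩
      rw [hx1, hx2]
      have : (c * c) x = x := by rw [hswap]; rfl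
      simpa [Equiv.Perm.mul_apply] using this
  have : #s = ∑ c ∈ t, #c.support := by
    rw [hcard]; exact Finset.sum_congr rfl (fun c hc => by rw [hfib c hc])
  rw [this]
  have : ∑ c ∈ t, #c.support = ∑ c ∈ t, 2 :=
    Finset.sum_congr rfl (fun c hc => by simp only [ht, mem_filter] at hc; exact hc.2)
  rw [this, Finset.sum_const, smul_eq_mul]
  rw [Equiv.Perm.cycleType_def, Multiset.count_map]
  rw [mul_comm]
  congr 1
  rw [ht, ← Finset.filter_val]
  · congr 1
    ext c
    simp [eq_comm]

lemma conj_card (n : ℕ) (lam : n.Partition) (σ : Equiv.Perm (Fin n))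
    (P : Equiv.Perm (Fin n) → Prop) [DecidablePred P] :
    #((conjClass n lam).filter fun ω => P (σ⁻¹ * ω * σ)) = #((conjClass n lam).filter P) := by
  classical
  apply Finset.card_bij' (fun ω _ => σ⁻¹ * ω * σ) (fun ω _ => σ * ω * σ⁻¹)
  · intro ω hω
    simp only [conjClass, mem_filter, mem_univ, true_and] at hω ⊢
    refine ⟨?_, hω.2⟩
    rw [← hω.1]
    exact Equiv.Perm.cycleType_conj
  · intro ω hω
    simp only [conjClass, mem_filter, mem_univ, true_and] at hω ⊢
    constructor
    · rw [← hω.1]; exact Equiv.Perm.cycleType_conj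
    · have : σ⁻¹ * (σ * ω * σ⁻¹) * σ = ω := by group
      rw [this]; exact hω.2
  · intro ω _; group
  · intro ω _; group

lemma conjClass_nonempty (n : ℕ) (lam : n.Partition) : (conjClass n lam).Nonempty := by
  classical
  have : ∃ g : Equiv.Perm (Fin n), g.cycleType = Multiset.filter (fun i => i ≠ 1) lam.parts := by
    rw [Equiv.Perm.exists_with_cycleType_iff]
    constructor
    · have h0 := Multiset.sum_filter_add_sum_filter_not (s := lam.parts) (fun i => i ≠ 1)
      have := lam.parts_sum
      simp only [Fintype.card_fin]
      omega
    · intro a ha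
      rw [Multiset.mem_filter] at ha
      have := lam.parts_pos ha.1
      have := ha.2
      omega
  obtain ⟨g, hg⟩ := this
  exact ⟨g, by simp [conjClass, hg]⟩


noncomputable def phi (n : ℕ) (i j : Fin n) (D u : ℝ) : Fin n × Fin n → ℝ := fun p =>
  if p.1 = j ∧ p.2 = i then D
  else if p.1 = i ∨ p.2 = j then u
  else if p.1 = j ∨ p.2 = i then -u
  else 0

lemma sum_ite_lt {n : ℕ} (a : Fin n) (c : ℝ) :
    ∑ y : Fin n, (if y < a then c else 0) = ((a : ℕ) : ℝ) * c := by
  rw [← Finset.sum_filter]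
  have h : univ.filter (fun y : Fin n => y < a) = Finset.Iio a := by
    ext y; simp
  rw [h, Finset.sum_const, Fin.card_Iio, nsmul_eq_mul]

lemma sum_ite_gt {n : ℕ} (a : Fin n) (c : ℝ) :
    ∑ y : Fin n, (if a < y then c else 0) = ((n : ℝ) - 1 - ((a : ℕ) : ℝ)) * c := by
  rw [← Finset.sum_filter]
  have h : univ.filter (fun y : Fin n => a < y) = Finset.Ioi a := by
    ext y; simp
  rw [h, Finset.sum_const, Fin.card_Ioi, nsmul_eq_mul]
  have h2 : (n - 1 - (a : ℕ)) + ((a : ℕ) + 1) = n := by have := a.isLt; omega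
  have h3 : ((n - 1 - (a : ℕ) : ℕ) : ℝ) + (((a : ℕ) : ℝ) + 1) = (n : ℝ) := by
    exact_mod_cast congrArg (Nat.cast : ℕ → ℝ) h2
  have h4 : ((n - 1 - (a : ℕ) : ℕ) : ℝ) = (n : ℝ) - 1 - ((a : ℕ) : ℝ) := by linarith
  rw [h4]

lemma phi_sum {n : ℕ} (i j : Fin n) (hij : i < j) (D u : ℝ) :
    ∑ p ∈ ((univ : Finset (Fin n × Fin n)).filter fun p => p.2 < p.1), phi n i j D u p
      = D + (2 * ((i : ℕ) : ℝ) - 2 * ((j : ℕ) : ℝ) + 2) * u := by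
  classical
  have hne : i ≠ j := ne_of_lt hij
  have hneji : j ≠ i := hne.symm
  rw [Finset.sum_filter, Fintype.sum_prod_type]
  have hrow_i : (∑ y : Fin n, if (i, y).2 < (i, y).1 then phi n i j D u (i, y) else 0)
      = ((i:ℕ):ℝ) * u := by
    rw [← sum_ite_lt i u]
    apply Finset.sum_congr rfl
    intro y _
    by_cases hy : y < i
    · have hyi : y ≠ i := ne_of_lt hy
      have hyj : y ≠ j := ne_of_lt (lt_trans hy hij)
      simp [phi, hy, hne, hyj, hyi]
    · simp [hy]
  have hrow_j : (∑ y : Fin n, if (j, y).2 < (j, y).1 then phi n i j D u (j, y) else 0)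
      = ((j:ℕ):ℝ) * (-u) + (D + u) := by
    have hpt : ∀ y : Fin n, (if (j, y).2 < (j, y).1 then phi n i j D u (j, y) else 0)
        = (if y < j then -u else 0) + (if y = i then D + u else 0) := by
      intro y
      by_cases hy : y < j
      · by_cases hyi : y = i
        · simp only [phi, hyi]
          simp [hij]
          try ring
          try linarith
        · have hyj : y ≠ j := ne_of_lt hy
          simp [phi, hy, hyi, hyj, hneji]
      · have hyi : y ≠ i := by
          intro h; subst h; exact hy hij
        simp [hy, hyi]
    rw [Finset.sum_congr rfl (fun y _ => hpt y), Finset.sum_add_distrib, sum_ite_lt]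
    rw [Finset.sum_ite_eq' univ i (fun _ => D + u)]
    simp
  have hrow_other : ∀ x : Fin n, x ≠ i → x ≠ j →
      (∑ y : Fin n, if (x, y).2 < (x, y).1 then phi n i j D u (x, y) else 0)
      = (if i < x then -u else 0) + (if j < x then u else 0) := by
    intro x hxi hxj
    have hpt : ∀ y : Fin n, (if (x, y).2 < (x, y).1 then phi n i j D u (x, y) else 0)
        = (if y = i then (if i < x then -u else 0) else 0)
          + (if y = j then (if j < x then u else 0) else 0) := by
      intro y
      by_cases hyi : y = i
      · simp only [hyi]
        by_cases hix : i < x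
        · simp [phi, hix, hxi, hxj, hne]
        · simp [hix, hne]
      · by_cases hyj : y = j
        · simp only [hyj]
          by_cases hjx : j < x
          · simp [phi, hjx, hxi, hxj, hneji]
          · simp [hjx, hneji]
        · by_cases hy : y < x
          · simp [phi, hy, hxi, hxj, hyi, hyj]
          · simp [hy, hyi, hyj]
    rw [Finset.sum_congr rfl (fun y _ => hpt y), Finset.sum_add_distrib]
    rw [Finset.sum_ite_eq' univ i (fun _ => (if i < x then -u else 0))]
    rw [Finset.sum_ite_eq' univ j (fun _ => (if j < x then u else 0))]
    simp
  have houter : ∀ x : Fin n,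
      (∑ y : Fin n, if (x, y).2 < (x, y).1 then phi n i j D u (x, y) else 0)
      = ((if i < x then -u else 0) + (if j < x then u else 0))
        + (if x = i then ((i:ℕ):ℝ) * u else 0)
        + (if x = j then ((j:ℕ):ℝ) * (-u) + (D + u) + u else 0) := by
    intro x
    by_cases hxi : x = i
    · subst hxi
      rw [hrow_i]
      have h1 : ¬ x < x := lt_irrefl x
      have h2 : ¬ j < x := asymm hij
      simp [h1, h2, hne]
    · by_cases hxj : x = j
      · subst hxj
        rw [hrow_j]
        have h1 : ¬ x < x := lt_irrefl x
        simp [h1, hij, hneji]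
        try ring
      · rw [hrow_other x hxi hxj]
        simp [hxi, hxj]
  rw [Finset.sum_congr rfl (fun x _ => houter x)]
  rw [Finset.sum_add_distrib, Finset.sum_add_distrib, Finset.sum_add_distrib]
  rw [sum_ite_gt i (-u), sum_ite_gt j u]
  rw [Finset.sum_ite_eq' univ i (fun _ => ((i:ℕ):ℝ) * u)]
  rw [Finset.sum_ite_eq' univ j (fun _ => ((j:ℕ):ℝ) * (-u) + (D + u) + u)]
  simp only [mem_univ, if_true]
  ring

lemma phi_pt {n : ℕ} (i j : Fin n) (hij : i < j) (Fr : Fin n → Fin n → ℝ)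
    (c1 cff cm ct m D u : ℝ)
    (hFiy : ∀ y : Fin n, y ≠ i → y ≠ j → m * Fr i y = c1 - cff)
    (hFxj : ∀ x : Fin n, x ≠ i → x ≠ j → m * Fr x j = c1 - cff)
    (hFjy : ∀ y : Fin n, y ≠ i → y ≠ j → m * Fr j y = cm - ct)
    (hFxi : ∀ x : Fin n, x ≠ i → x ≠ j → m * Fr x i = cm - ct)
    (hFg : ∀ x y : Fin n, x ≠ i → x ≠ j → y ≠ i → y ≠ j → x ≠ y → Fr x y = Fr y x)
    (hD : m * (Fr j i - Fr i j) = D)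
    (hu : (c1 - cff) - (cm - ct) = u) :
    ∀ x y : Fin n, y < x → m * (Fr x y - Fr y x) = phi n i j D u (x, y) := by
  intro x y hyx
  simp only [phi]
  by_cases h1 : x = j ∧ y = i
  · rw [if_pos h1, h1.1, h1.2, hD]
  · rw [if_neg h1]
    by_cases h2 : x = i
    · subst h2
      have hyi : y ≠ x := ne_of_lt hyx
      have hyj : y ≠ j := ne_of_lt (lt_trans hyx hij)
      rw [if_pos (Or.inl rfl)]
      have e1 := hFiy y hyi hyj
      have e2 := hFxi y hyi hyj
      linear_combination e1 - e2 + hu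
    · by_cases h3 : y = j
      · subst h3
        have hxj : x ≠ y := ne_of_gt hyx
        rw [if_pos (Or.inr rfl)]
        have e1 := hFxj x h2 hxj
        have e2 := hFjy x h2 hxj
        linear_combination e1 - e2 + hu
      · rw [if_neg (by tauto)]
        by_cases h4 : x = j
        · subst h4
          have hyi : y ≠ i := fun h => h1 ⟨rfl, h⟩
          have hyj : y ≠ x := ne_of_lt hyx
          rw [if_pos (Or.inl rfl)]
          have e1 := hFjy y hyi hyj
          have e2 := hFxj y hyi hyj
          linear_combination e1 - e2 - hu
        · by_cases h5 : y = i
          · subst h5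
            rw [if_pos (Or.inr rfl)]
            have e1 := hFxi x h2 h4
            have e2 := hFiy x h2 h4
            linear_combination e1 - e2 - hu
          · rw [if_neg (by tauto)]
            rw [hFg x y h2 h4 h5 h3 (ne_of_gt hyx)]
            ring


section
variable {n : ℕ} {lam : n.Partition}

lemma conj_count (σ : Equiv.Perm (Fin n)) (P Q : Equiv.Perm (Fin n) → Prop)
    [DecidablePred P] [DecidablePred Q]
    (h : ∀ ω, Q ω ↔ P (σ⁻¹ * ω * σ)) :
    #((conjClass n lam).filter Q) = #((conjClass n lam).filter P) := by
  rw [Finset.filter_congr (fun ω _ => h ω)]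
  exact conj_card n lam σ P

lemma fix_card (ω : Equiv.Perm (Fin n)) (hω : ω ∈ conjClass n lam) :
    #(univ.filter fun x => ω x = x) = Multiset.count 1 lam.parts := by
  apply fix_card'
  simpa [conjClass] using hω

lemma two_card (ω : Equiv.Perm (Fin n)) (hω : ω ∈ conjClass n lam) :
    #(univ.filter fun x => ω x ≠ x ∧ ω (ω x) = x) = 2 * Multiset.count 2 lam.parts := by
  have h : ω.cycleType = Multiset.filter (fun i => i ≠ 1) lam.parts := by
    simpa [conjClass] using hω
  rw [two_card0 ω, h]
  congr 1
  rw [Multiset.count_filter]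
  simp

lemma sum_swap_count {α β : Type*} [DecidableEq α] [DecidableEq β]
    (s : Finset α) (t : Finset β) (p : α → β → Prop) [∀ a b, Decidable (p a b)] :
    ∑ b ∈ t, #(s.filter fun a => p a b) = ∑ a ∈ s, #(t.filter fun b => p a b) := by
  simp_rw [Finset.card_filter]; exact Finset.sum_comm

-- cascade lemma 1
lemma n_c1 (u : Fin n) :
    n * #((conjClass n lam).filter fun ω => ω u = u)
      = #(conjClass n lam) * Multiset.count 1 lam.parts := by
  classical
  have hconst : ∀ u' : Fin n, #((conjClass n lam).filter fun ω => ω u' = u')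
      = #((conjClass n lam).filter fun ω => ω u = u) := by
    intro u'
    apply conj_count (Equiv.swap u u')
    intro ω
    simp [Equiv.Perm.mul_apply, Equiv.swap_apply_left, Equiv.swap_apply_eq_iff]
  have h1 : ∑ u' : Fin n, #((conjClass n lam).filter fun ω => ω u' = u')
      = n * #((conjClass n lam).filter fun ω => ω u = u) := by
    rw [Finset.sum_congr rfl (fun u' _ => hconst u'), Finset.sum_const, smul_eq_mul,
      Finset.card_univ, Fintype.card_fin]
  have h2 : ∑ u' : Fin n, #((conjClass n lam).filter fun ω => ω u' = u')
      = #(conjClass n lam) * Multiset.count 1 lam.parts := by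
    rw [sum_swap_count]
    rw [Finset.sum_congr rfl (fun ω hω => fix_card ω hω), Finset.sum_const, smul_eq_mul]
  omega

-- cascade lemma 2
lemma n_t1 (u : Fin n) :
    n * #((conjClass n lam).filter fun ω => ω u ≠ u ∧ ω (ω u) = u)
      = #(conjClass n lam) * (2 * Multiset.count 2 lam.parts) := by
  classical
  have hconst : ∀ u' : Fin n, #((conjClass n lam).filter fun ω => ω u' ≠ u' ∧ ω (ω u') = u')
      = #((conjClass n lam).filter fun ω => ω u ≠ u ∧ ω (ω u) = u) := by
    intro u'
    apply conj_count (Equiv.swap u u')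
    intro ω
    simp [Equiv.Perm.mul_apply, Equiv.swap_apply_left, Equiv.swap_apply_eq_iff]
  have h1 : ∑ u' : Fin n, #((conjClass n lam).filter fun ω => ω u' ≠ u' ∧ ω (ω u') = u')
      = n * #((conjClass n lam).filter fun ω => ω u ≠ u ∧ ω (ω u) = u) := by
    rw [Finset.sum_congr rfl (fun u' _ => hconst u'), Finset.sum_const, smul_eq_mul,
      Finset.card_univ, Fintype.card_fin]
  have h2 : ∑ u' : Fin n, #((conjClass n lam).filter fun ω => ω u' ≠ u' ∧ ω (ω u') = u')
      = #(conjClass n lam) * (2 * Multiset.count 2 lam.parts) := by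
    rw [sum_swap_count]
    rw [Finset.sum_congr rfl (fun ω hω => two_card ω hω), Finset.sum_const, smul_eq_mul]
  omega

-- ff_rel
lemma ff_rel (u v : Fin n) (huv : u ≠ v) :
    (n - 1) * #((conjClass n lam).filter fun ω => ω u = u ∧ ω v = v)
      = #((conjClass n lam).filter fun ω => ω u = u) * (Multiset.count 1 lam.parts - 1) := by
  classical
  set C1 := (conjClass n lam).filter fun ω => ω u = u with hC1
  have hconst : ∀ v' ∈ univ.erase u, #(C1.filter fun ω => ω v' = v')
      = #((conjClass n lam).filter fun ω => ω u = u ∧ ω v = v) := by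
    intro v' hv'
    have hv'u : v' ≠ u := (Finset.mem_erase.1 hv').1
    rw [hC1, Finset.filter_filter]
    apply conj_count (Equiv.swap v v')
    intro ω
    have h1 : Equiv.swap v v' u = u :=
      Equiv.swap_apply_of_ne_of_ne huv (Ne.symm hv'u)
    simp [Equiv.Perm.mul_apply, Equiv.swap_apply_left, Equiv.swap_apply_eq_iff, h1]
  have h1 : ∑ v' ∈ univ.erase u, #(C1.filter fun ω => ω v' = v')
      = (n - 1) * #((conjClass n lam).filter fun ω => ω u = u ∧ ω v = v) := by
    rw [Finset.sum_congr rfl hconst, Finset.sum_const, smul_eq_mul,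
      Finset.card_erase_of_mem (mem_univ u), Finset.card_univ, Fintype.card_fin]
  have h2 : ∑ v' ∈ univ.erase u, #(C1.filter fun ω => ω v' = v')
      = #C1 * (Multiset.count 1 lam.parts - 1) := by
    rw [sum_swap_count]
    rw [Finset.sum_congr rfl (fun ω hω => ?_), Finset.sum_const, smul_eq_mul]
    have hωC : ω ∈ conjClass n lam := (Finset.mem_filter.1 hω).1
    have hωu : ω u = u := (Finset.mem_filter.1 hω).2
    have : (univ.erase u).filter (fun v' => ω v' = v')
        = (univ.filter fun x => ω x = x).erase u := by
      ext x
      simp only [Finset.mem_filter, Finset.mem_erase, Finset.mem_univ, true_and]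
      tauto
    rw [this, Finset.card_erase_of_mem (by simp [hωu]), fix_card ω hωC]
  omega

-- f_rel
lemma f_rel (u v w : Fin n) (huv : u ≠ v) (huw : u ≠ w) (hvw : v ≠ w) :
    #((conjClass n lam).filter fun ω => ω u = u)
      = #((conjClass n lam).filter fun ω => ω u = u ∧ ω v = v)
        + (n - 2) * #((conjClass n lam).filter fun ω => ω u = u ∧ ω v = w) := by
  classical
  set C1 := (conjClass n lam).filter fun ω => ω u = u with hC1
  have hfib : #C1 = ∑ x : Fin n, #(C1.filter fun ω => ω v = x) :=
    Finset.card_eq_sum_card_fiberwise (fun ω _ => mem_univ _)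
  have huniv : ∑ x : Fin n, #(C1.filter fun ω => ω v = x)
      = #(C1.filter fun ω => ω v = v) + ∑ x ∈ univ.erase v, #(C1.filter fun ω => ω v = x) := by
    rw [← Finset.add_sum_erase _ _ (mem_univ v)]
  have herase : ∑ x ∈ univ.erase v, #(C1.filter fun ω => ω v = x)
      = #(C1.filter fun ω => ω v = u) + ∑ x ∈ (univ.erase v).erase u, #(C1.filter fun ω => ω v = x) := by
    rw [← Finset.add_sum_erase _ _ (Finset.mem_erase.2 ⟨huv, mem_univ u⟩)]
  have hzero : #(C1.filter fun ω => ω v = u) = 0 := by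
    rw [Finset.card_eq_zero, Finset.filter_eq_empty_iff]
    intro ω hω
    have hωu : ω u = u := (Finset.mem_filter.1 hω).2
    intro h
    exact huv (ω.injective (by rw [hωu, h]))
  have hconst : ∀ x ∈ (univ.erase v).erase u, #(C1.filter fun ω => ω v = x)
      = #((conjClass n lam).filter fun ω => ω u = u ∧ ω v = w) := by
    intro x hx
    have hxu : x ≠ u := (Finset.mem_erase.1 hx).1
    have hxv : x ≠ v := (Finset.mem_erase.1 (Finset.mem_erase.1 hx).2).1
    rw [hC1, Finset.filter_filter]
    apply conj_count (Equiv.swap w x)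
    intro ω
    have h1 : Equiv.swap w x u = u := Equiv.swap_apply_of_ne_of_ne huw (Ne.symm hxu)
    have h2 : Equiv.swap w x v = v := Equiv.swap_apply_of_ne_of_ne hvw (Ne.symm hxv)
    simp [Equiv.Perm.mul_apply, Equiv.swap_apply_left, Equiv.swap_apply_eq_iff, h1, h2]
  have hsum : ∑ x ∈ (univ.erase v).erase u, #(C1.filter fun ω => ω v = x)
      = (n - 2) * #((conjClass n lam).filter fun ω => ω u = u ∧ ω v = w) := by
    rw [Finset.sum_congr rfl hconst, Finset.sum_const, smul_eq_mul,
      Finset.card_erase_of_mem (Finset.mem_erase.2 ⟨huv, mem_univ u⟩),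
      Finset.card_erase_of_mem (mem_univ v), Finset.card_univ, Fintype.card_fin,
      Nat.sub_sub]
  have hCv : #(C1.filter fun ω => ω v = v) = #((conjClass n lam).filter fun ω => ω u = u ∧ ω v = v) := by
    rw [hC1, Finset.filter_filter]
  omega

-- m_rel
lemma m_rel (u v : Fin n) (huv : u ≠ v) :
    #(conjClass n lam)
      = #((conjClass n lam).filter fun ω => ω u = u)
        + (n - 1) * #((conjClass n lam).filter fun ω => ω u = v) := by
  classical
  have hfib : #(conjClass n lam) = ∑ x : Fin n, #((conjClass n lam).filter fun ω => ω u = x) :=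
    Finset.card_eq_sum_card_fiberwise (fun ω _ => mem_univ _)
  have huniv : ∑ x : Fin n, #((conjClass n lam).filter fun ω => ω u = x)
      = #((conjClass n lam).filter fun ω => ω u = u)
        + ∑ x ∈ univ.erase u, #((conjClass n lam).filter fun ω => ω u = x) := by
    rw [← Finset.add_sum_erase _ _ (mem_univ u)]
  have hconst : ∀ x ∈ univ.erase u, #((conjClass n lam).filter fun ω => ω u = x)
      = #((conjClass n lam).filter fun ω => ω u = v) := by
    intro x hx
    have hxu : x ≠ u := (Finset.mem_erase.1 hx).1
    apply conj_count (Equiv.swap v x)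
    intro ω
    have h1 : Equiv.swap v x u = u := Equiv.swap_apply_of_ne_of_ne huv (Ne.symm hxu)
    simp [Equiv.Perm.mul_apply, Equiv.swap_apply_left, Equiv.swap_apply_eq_iff, h1]
  have hsum : ∑ x ∈ univ.erase u, #((conjClass n lam).filter fun ω => ω u = x)
      = (n - 1) * #((conjClass n lam).filter fun ω => ω u = v) := by
    rw [Finset.sum_congr rfl hconst, Finset.sum_const, smul_eq_mul,
      Finset.card_erase_of_mem (mem_univ u), Finset.card_univ, Fintype.card_fin]
  omega

-- t_rel
lemma t_rel (u v : Fin n) (huv : u ≠ v) :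
    #((conjClass n lam).filter fun ω => ω u ≠ u ∧ ω (ω u) = u)
      = (n - 1) * #((conjClass n lam).filter fun ω => ω u = v ∧ ω v = u) := by
  classical
  set s := (conjClass n lam).filter fun ω => ω u ≠ u ∧ ω (ω u) = u with hs
  have hfib : #s = ∑ x ∈ univ.erase u, #(s.filter fun ω => ω u = x) :=
    Finset.card_eq_sum_card_fiberwise (fun ω hω => by
      simp only [Finset.mem_coe, hs, Finset.mem_filter] at hω
      exact Finset.mem_erase.2 ⟨hω.2.1, mem_univ _⟩)
  have hconst : ∀ x ∈ univ.erase u, #(s.filter fun ω => ω u = x)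
      = #((conjClass n lam).filter fun ω => ω u = v ∧ ω v = u) := by
    intro x hx
    have hxu : x ≠ u := (Finset.mem_erase.1 hx).1
    rw [hs, Finset.filter_filter]
    have hcong : (conjClass n lam).filter (fun ω => (ω u ≠ u ∧ ω (ω u) = u) ∧ ω u = x)
        = (conjClass n lam).filter fun ω => ω u = x ∧ ω x = u := by
      apply Finset.filter_congr
      intro ω _
      constructor
      · rintro ⟨⟨h1, h2⟩, h3⟩
        exact ⟨h3, by rw [← h3]; exact h2⟩
      · rintro ⟨h1, h2⟩
        exact ⟨⟨by rw [h1]; exact hxu, by rw [h1, h2]⟩, h1⟩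
    rw [hcong]
    apply conj_count (Equiv.swap v x)
    intro ω
    have h1 : Equiv.swap v x u = u := Equiv.swap_apply_of_ne_of_ne huv (Ne.symm hxu)
    simp [Equiv.Perm.mul_apply, Equiv.swap_apply_left, Equiv.swap_apply_eq_iff, h1]
  rw [hfib, Finset.sum_congr rfl hconst, Finset.sum_const, smul_eq_mul,
    Finset.card_erase_of_mem (mem_univ u), Finset.card_univ, Fintype.card_fin]

-- c_rel
lemma c_rel (u v w : Fin n) (huv : u ≠ v) (huw : u ≠ w) (hvw : v ≠ w) :
    #((conjClass n lam).filter fun ω => ω u = v)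
      = #((conjClass n lam).filter fun ω => ω u = v ∧ ω v = u)
        + (n - 2) * #((conjClass n lam).filter fun ω => ω u = v ∧ ω v = w) := by
  classical
  set C1 := (conjClass n lam).filter fun ω => ω u = v with hC1
  have hfib : #C1 = ∑ x : Fin n, #(C1.filter fun ω => ω v = x) :=
    Finset.card_eq_sum_card_fiberwise (fun ω _ => mem_univ _)
  have huniv : ∑ x : Fin n, #(C1.filter fun ω => ω v = x)
      = #(C1.filter fun ω => ω v = u) + ∑ x ∈ univ.erase u, #(C1.filter fun ω => ω v = x) := by
    rw [← Finset.add_sum_erase _ _ (mem_univ u)]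
  have herase : ∑ x ∈ univ.erase u, #(C1.filter fun ω => ω v = x)
      = #(C1.filter fun ω => ω v = v)
        + ∑ x ∈ (univ.erase u).erase v, #(C1.filter fun ω => ω v = x) := by
    rw [← Finset.add_sum_erase _ _ (Finset.mem_erase.2 ⟨Ne.symm huv, mem_univ v⟩)]
  have hzero : #(C1.filter fun ω => ω v = v) = 0 := by
    rw [Finset.card_eq_zero, Finset.filter_eq_empty_iff]
    intro ω hω
    have hωu : ω u = v := (Finset.mem_filter.1 hω).2
    intro h
    exact huv (ω.injective (by rw [hωu, h]))
  have hconst : ∀ x ∈ (univ.erase u).erase v, #(C1.filter fun ω => ω v = x)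
      = #((conjClass n lam).filter fun ω => ω u = v ∧ ω v = w) := by
    intro x hx
    have hxv : x ≠ v := (Finset.mem_erase.1 hx).1
    have hxu : x ≠ u := (Finset.mem_erase.1 (Finset.mem_erase.1 hx).2).1
    rw [hC1, Finset.filter_filter]
    apply conj_count (Equiv.swap w x)
    intro ω
    have h1 : Equiv.swap w x u = u := Equiv.swap_apply_of_ne_of_ne huw (Ne.symm hxu)
    have h2 : Equiv.swap w x v = v := Equiv.swap_apply_of_ne_of_ne hvw (Ne.symm hxv)
    simp [Equiv.Perm.mul_apply, Equiv.swap_apply_left, Equiv.swap_apply_eq_iff, h1, h2]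
  have hsum : ∑ x ∈ (univ.erase u).erase v, #(C1.filter fun ω => ω v = x)
      = (n - 2) * #((conjClass n lam).filter fun ω => ω u = v ∧ ω v = w) := by
    rw [Finset.sum_congr rfl hconst, Finset.sum_const, smul_eq_mul,
      Finset.card_erase_of_mem (Finset.mem_erase.2 ⟨Ne.symm huv, mem_univ v⟩),
      Finset.card_erase_of_mem (mem_univ u), Finset.card_univ, Fintype.card_fin, Nat.sub_sub]
  have hCv : #(C1.filter fun ω => ω v = u)
      = #((conjClass n lam).filter fun ω => ω u = v ∧ ω v = u) := by
    rw [hC1, Finset.filter_filter]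
  omega


end

end Stmt2Aux

open Stmt2Aux Finset Equiv in
set_option maxHeartbeats 2000000 in
theorem stmt2 (n : ℕ) (hn : 3 ≤ n) (lam : n.Partition) (a1 a2 : ℕ)
    (ha1 : a1 = Multiset.count 1 lam.parts) (ha2 : a2 = Multiset.count 2 lam.parts)
    (i j : Fin n) (hij : i < j) :
    (((conjClass n lam).filter fun ω => ω j < ω i).card : ℝ) / ((conjClass n lam).card : ℝ)
      = 1 / 2 + (a2 : ℝ) / ((n : ℝ) * ((n : ℝ) - 1))
        - (a1 : ℝ) * ((a1 : ℝ) - 1) / (2 * (n : ℝ) * ((n : ℝ) - 1))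
        + (((j : ℕ) - (i : ℕ) - 1 : ℕ) : ℝ)
          * (((n : ℝ) - (n : ℝ) * (a1 : ℝ) - (a1 : ℝ) + (a1 : ℝ) ^ 2 - 2 * (a2 : ℝ))
            / ((n : ℝ) * ((n : ℝ) - 1) * ((n : ℝ) - 2))) := by
  classical
  have hne : i ≠ j := ne_of_lt hij
  have hneji : j ≠ i := hne.symm
  set C := conjClass n lam with hC
  set F : Fin n → Fin n → ℕ := fun x y => #(C.filter fun ω => ω i = x ∧ ω j = y) with hFdef
  set Sset : Finset (Fin n × Fin n) := univ.filter (fun p => p.2 < p.1) with hSdef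
  -- nat counts
  set c1 : ℕ := #(C.filter fun ω => ω i = i) with hc1def
  set c1j : ℕ := #(C.filter fun ω => ω j = j) with hc1jdef
  set cff : ℕ := #(C.filter fun ω => ω i = i ∧ ω j = j) with hcffdef
  set ct : ℕ := #(C.filter fun ω => ω i = j ∧ ω j = i) with hctdef
  set cm : ℕ := #(C.filter fun ω => ω i = j) with hcmdef
  set cmji : ℕ := #(C.filter fun ω => ω j = i) with hcmjidef
  set t1 : ℕ := #(C.filter fun ω => ω i ≠ i ∧ ω (ω i) = i) with ht1def
  -- basic nat relations
  have hc1 : n * c1 = #C * a1 := by rw [ha1]; exact n_c1 i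
  have hc1j : n * c1j = #C * a1 := by rw [ha1]; exact n_c1 j
  have hc1eq : c1j = c1 := Nat.eq_of_mul_eq_mul_left (by omega) (hc1j.trans hc1.symm)
  have ht1 : n * t1 = #C * (2 * a2) := by rw [ha2]; exact n_t1 i
  have htr : t1 = (n - 1) * ct := t_rel i j hne
  have hffr : (n - 1) * cff = c1 * (a1 - 1) := by rw [ha1]; exact ff_rel i j hne
  have hmr : #C = c1 + (n - 1) * cm := m_rel i j hne
  have hmrj : #C = c1j + (n - 1) * cmji := m_rel j i hneji
  have hcmeq : cmji = cm := by
    have h1 : (n - 1) * cmji = (n - 1) * cm := by omega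
    exact Nat.eq_of_mul_eq_mul_left (by omega) h1
  -- swapped-conjunction identities
  have hswap_ff : #(C.filter fun ω => ω j = j ∧ ω i = i) = cff := by
    rw [hcffdef]; congr 1; apply Finset.filter_congr; intro ω _; exact and_comm
  have hswap_ct : #(C.filter fun ω => ω j = i ∧ ω i = j) = ct := by
    rw [hctdef]; congr 1; apply Finset.filter_congr; intro ω _; exact and_comm
  have hswap_F : ∀ x y : Fin n, #(C.filter fun ω => ω j = y ∧ ω i = x) = F x y := by
    intro x y; rw [hFdef]; congr 1; apply Finset.filter_congr; intro ω _; exact and_comm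
  -- the four F-value relations
  have hFiy : ∀ y : Fin n, y ≠ i → y ≠ j → c1 = cff + (n - 2) * F i y := by
    intro y h1 h2
    exact f_rel i j y hne (Ne.symm h1) (Ne.symm h2)
  have hFxj : ∀ x : Fin n, x ≠ i → x ≠ j → c1 = cff + (n - 2) * F x j := by
    intro x h1 h2
    have h := f_rel (lam := lam) j i x hneji (Ne.symm h2) (Ne.symm h1)
    rw [hswap_ff, hswap_F] at h
    rw [← hc1eq]
    exact h
  have hFjy : ∀ y : Fin n, y ≠ i → y ≠ j → cm = ct + (n - 2) * F j y := by
    intro y h1 h2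
    exact c_rel i j y hne (Ne.symm h1) (Ne.symm h2)
  have hFxi : ∀ x : Fin n, x ≠ i → x ≠ j → cm = ct + (n - 2) * F x i := by
    intro x h1 h2
    have h := c_rel (lam := lam) j i x hneji (Ne.symm h2) (Ne.symm h1)
    rw [hswap_ct, hswap_F] at h
    rw [← hcmeq]
    exact h
  have hFg : ∀ x y : Fin n, x ≠ i → x ≠ j → y ≠ i → y ≠ j → x ≠ y → F x y = F y x := by
    intro x y hxi hxj hyi hyj hxy
    rw [hFdef]
    apply conj_count (Equiv.swap x y)
    intro ω
    have h1 : Equiv.swap x y i = i := Equiv.swap_apply_of_ne_of_ne (Ne.symm hxi) (Ne.symm hyi)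
    have h2 : Equiv.swap x y j = j := Equiv.swap_apply_of_ne_of_ne (Ne.symm hxj) (Ne.symm hyj)
    simp [Equiv.Perm.mul_apply, Equiv.swap_apply_left, Equiv.swap_apply_right,
      Equiv.swap_apply_eq_iff, h1, h2]
  -- decomposition of A and B as sums over Sset
  have hA : #(C.filter fun ω => ω j < ω i) = ∑ p ∈ Sset, F p.1 p.2 := by
    have hmem : ∀ ω ∈ C.filter (fun ω => ω j < ω i), (ω i, ω j) ∈ Sset := by
      intro ω hω
      simp only [hSdef, mem_filter, mem_univ, true_and]
      exact (mem_filter.1 hω).2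
    rw [Finset.card_eq_sum_card_fiberwise hmem]
    apply Finset.sum_congr rfl
    intro p hp
    have hp2 : p.2 < p.1 := by
      simp only [hSdef, mem_filter] at hp; exact hp.2
    congr 1
    ext ω
    simp only [mem_filter, Prod.ext_iff]
    constructor
    · rintro ⟨⟨h1, -⟩, h2, h3⟩; exact ⟨h1, h2, h3⟩
    · rintro ⟨h1, h2, h3⟩; exact ⟨⟨h1, by rw [h2, h3]; exact hp2⟩, h2, h3⟩
  have hB : #(C.filter fun ω => ω i < ω j) = ∑ p ∈ Sset, F p.2 p.1 := by
    have hmem : ∀ ω ∈ C.filter (fun ω => ω i < ω j), (ω j, ω i) ∈ Sset := by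
      intro ω hω
      simp only [hSdef, mem_filter, mem_univ, true_and]
      exact (mem_filter.1 hω).2
    rw [Finset.card_eq_sum_card_fiberwise hmem]
    apply Finset.sum_congr rfl
    intro p hp
    have hp2 : p.2 < p.1 := by
      simp only [hSdef, mem_filter] at hp; exact hp.2
    congr 1
    ext ω
    simp only [mem_filter, Prod.ext_iff]
    constructor
    · rintro ⟨⟨h1, -⟩, h2, h3⟩; exact ⟨h1, h3, h2⟩
    · rintro ⟨h1, h2, h3⟩; exact ⟨⟨h1, by rw [h2, h3]; exact hp2⟩, h3, h2⟩
  have hNsplit : #C = #(C.filter fun ω => ω j < ω i) + #(C.filter fun ω => ω i < ω j) := by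
    have h0 := Finset.card_filter_add_card_filter_not (s := C) (p := fun ω => ω j < ω i)
    have h1 : C.filter (fun ω => ¬ ω j < ω i) = C.filter (fun ω => ω i < ω j) := by
      apply Finset.filter_congr
      intro ω _
      have hωne : ω i ≠ ω j := fun h => hne (ω.injective h)
      simp only [not_lt]
      exact ⟨fun h => lt_of_le_of_ne h hωne, fun h => le_of_lt h⟩
    rw [h1] at h0
    omega
  -- real versions
  have hn0 : (n : ℝ) ≠ 0 := by
    have : (0:ℝ) < n := by exact_mod_cast (by omega : 0 < n)
    linarith
  have hn3r : (3:ℝ) ≤ (n:ℝ) := by exact_mod_cast hn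
  have hn1 : (n : ℝ) - 1 ≠ 0 := by linarith
  have hn2 : (n : ℝ) - 2 ≠ 0 := by linarith
  have hNpos : 0 < #C := Finset.card_pos.2 (conjClass_nonempty n lam)
  have hN0 : (#C : ℝ) ≠ 0 := by
    have : (0:ℝ) < #C := by exact_mod_cast hNpos
    linarith
  have hcast1 : ((n - 1 : ℕ) : ℝ) = (n:ℝ) - 1 := by
    rw [Nat.cast_sub (by omega)]; norm_num
  have hcast2 : ((n - 2 : ℕ) : ℝ) = (n:ℝ) - 2 := by
    rw [Nat.cast_sub (by omega)]; norm_num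
  -- real equations
  have E1 : (#C : ℝ) = (#(C.filter fun ω => ω j < ω i) : ℝ) + (#(C.filter fun ω => ω i < ω j) : ℝ) := by
    exact_mod_cast hNsplit
  have E3 : (n:ℝ) * (c1:ℝ) = (#C:ℝ) * (a1:ℝ) := by exact_mod_cast hc1
  have E4 : (n:ℝ) * ((n:ℝ)-1) * (cff:ℝ) = (#C:ℝ) * ((a1:ℝ) * ((a1:ℝ)-1)) := by
    have h : n * ((n-1) * cff) = #C * (a1 * (a1-1)) := by
      rw [hffr, show n * (c1 * (a1-1)) = (n * c1) * (a1-1) by ring, hc1]; ring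
    rcases Nat.eq_zero_or_pos a1 with ha10 | ha11
    · subst ha10
      have hcf0 : cff = 0 := by
        have := hffr; simp at this; omega
      rw [hcf0]; simp
    · have h2 := congrArg (Nat.cast : ℕ → ℝ) h
      have hca1 : ((a1 - 1 : ℕ) : ℝ) = (a1:ℝ) - 1 := by
        rw [Nat.cast_sub (by omega)]; norm_num
      push_cast [hcast1, hca1] at h2
      linarith
  have E5 : (n:ℝ) * ((n:ℝ)-1) * (ct:ℝ) = (#C:ℝ) * (2 * (a2:ℝ)) := by
    have h : n * ((n-1) * ct) = #C * (2 * a2) := by rw [← htr]; exact ht1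
    have h2 := congrArg (Nat.cast : ℕ → ℝ) h
    push_cast [hcast1] at h2
    linarith
  have E6 : (#C:ℝ) = (c1:ℝ) + ((n:ℝ)-1) * (cm:ℝ) := by
    have h2 := congrArg (Nat.cast : ℕ → ℝ) hmr
    push_cast [hcast1] at h2
    linarith
  -- real A, B sums
  have hAr : (#(C.filter fun ω => ω j < ω i) : ℝ) = ∑ p ∈ Sset, (F p.1 p.2 : ℝ) := by
    rw [hA]; push_cast; rfl
  have hBr : (#(C.filter fun ω => ω i < ω j) : ℝ) = ∑ p ∈ Sset, (F p.2 p.1 : ℝ) := by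
    rw [hB]; push_cast; rfl
  set Dr : ℝ := ((n:ℝ)-2) * ((ct:ℝ) - (cff:ℝ)) with hDrdef
  set ur : ℝ := ((c1:ℝ) - (cff:ℝ)) - ((cm:ℝ) - (ct:ℝ)) with hurdef
  have castrel : ∀ (a b : ℕ) (s t : Fin n), a = b + (n - 2) * F s t →
      ((n:ℝ)-2) * (F s t : ℝ) = (a:ℝ) - (b:ℝ) := by
    intro a b s t h
    have h2 := congrArg (Nat.cast : ℕ → ℝ) h
    push_cast [hcast2] at h2
    linarith
  have hFiy' : ∀ y : Fin n, y ≠ i → y ≠ j → ((n:ℝ)-2) * ((F i y : ℕ) : ℝ) = (c1:ℝ) - (cff:ℝ) := by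
    intro y h1 h2; exact castrel _ _ i y (hFiy y h1 h2)
  have hFxj' : ∀ x : Fin n, x ≠ i → x ≠ j → ((n:ℝ)-2) * ((F x j : ℕ) : ℝ) = (c1:ℝ) - (cff:ℝ) := by
    intro x h1 h2; exact castrel _ _ x j (hFxj x h1 h2)
  have hFjy' : ∀ y : Fin n, y ≠ i → y ≠ j → ((n:ℝ)-2) * ((F j y : ℕ) : ℝ) = (cm:ℝ) - (ct:ℝ) := by
    intro y h1 h2; exact castrel _ _ j y (hFjy y h1 h2)
  have hFxi' : ∀ x : Fin n, x ≠ i → x ≠ j → ((n:ℝ)-2) * ((F x i : ℕ) : ℝ) = (cm:ℝ) - (ct:ℝ) := by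
    intro x h1 h2; exact castrel _ _ x i (hFxi x h1 h2)
  have hFg' : ∀ x y : Fin n, x ≠ i → x ≠ j → y ≠ i → y ≠ j → x ≠ y →
      ((F x y : ℕ) : ℝ) = ((F y x : ℕ) : ℝ) := by
    intro x y h1 h2 h3 h4 h5; exact_mod_cast hFg x y h1 h2 h3 h4 h5
  have hFji0 : F j i = ct := rfl
  have hFij0 : F i j = cff := rfl
  have hFji : ((F j i : ℕ) : ℝ) = (ct : ℝ) := congrArg _ hFji0
  have hFij : ((F i j : ℕ) : ℝ) = (cff : ℝ) := congrArg _ hFij0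
  have hD0 : ((n:ℝ)-2) * (((F j i : ℕ):ℝ) - ((F i j : ℕ):ℝ)) = Dr := by
    rw [hFji, hFij, hDrdef]
  have hu0 : ((c1:ℝ) - (cff:ℝ)) - ((cm:ℝ) - (ct:ℝ)) = ur := by rw [hurdef]
  have hptfun := phi_pt i j hij (fun x y => ((F x y : ℕ) : ℝ))
    ((c1:ℝ)) ((cff:ℝ)) ((cm:ℝ)) ((ct:ℝ)) (((n:ℝ)-2)) Dr ur
    hFiy' hFxj' hFjy' hFxi' hFg' hD0 hu0
  have hpt : ∀ p ∈ Sset, ((n:ℝ)-2) * ((F p.1 p.2 : ℝ) - (F p.2 p.1 : ℝ)) = phi n i j Dr ur p := by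
    rintro ⟨x, y⟩ hp
    have hyx : y < x := by simp only [hSdef, mem_filter] at hp; exact hp.2
    exact hptfun x y hyx
  have hdiff : ((n:ℝ)-2) * ((#(C.filter fun ω => ω j < ω i) : ℝ) - (#(C.filter fun ω => ω i < ω j) : ℝ))
      = Dr + (2 * ((i:ℕ):ℝ) - 2 * ((j:ℕ):ℝ) + 2) * ur := by
    rw [hAr, hBr, ← Finset.sum_sub_distrib, Finset.mul_sum]
    rw [Finset.sum_congr rfl hpt]
    exact phi_sum i j hij Dr ur
  -- solve
  have h2A : 2 * ((n:ℝ)-2) * (#(C.filter fun ω => ω j < ω i) : ℝ)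
      = ((n:ℝ)-2) * (#C:ℝ) + Dr + (2 * ((i:ℕ):ℝ) - 2 * ((j:ℕ):ℝ) + 2) * ur := by
    linear_combination hdiff - ((n:ℝ)-2) * E1
  have vcff : (cff:ℝ) = (#C:ℝ) * ((a1:ℝ) * ((a1:ℝ)-1)) / ((n:ℝ) * ((n:ℝ)-1)) := by
    rw [eq_div_iff (mul_ne_zero hn0 hn1)]
    linear_combination E4
  have vct : (ct:ℝ) = (#C:ℝ) * (2 * (a2:ℝ)) / ((n:ℝ) * ((n:ℝ)-1)) := by
    rw [eq_div_iff (mul_ne_zero hn0 hn1)]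
    linear_combination E5
  have vc1 : (c1:ℝ) = (#C:ℝ) * (a1:ℝ) / (n:ℝ) := by
    rw [eq_div_iff hn0]
    linear_combination E3
  have vcm : (cm:ℝ) = (#C:ℝ) * ((n:ℝ) - (a1:ℝ)) / ((n:ℝ) * ((n:ℝ)-1)) := by
    rw [eq_div_iff (mul_ne_zero hn0 hn1)]
    linear_combination (-(n:ℝ)) * E6 - E3
  rw [hDrdef, hurdef, vcff, vct, vc1, vcm] at h2A
  have hijn : (i:ℕ) < (j:ℕ) := hij
  have hd : (((j:ℕ) - (i:ℕ) - 1 : ℕ):ℝ) = ((j:ℕ):ℝ) - ((i:ℕ):ℝ) - 1 := by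
    have h : ((j:ℕ) - (i:ℕ) - 1) + ((i:ℕ) + 1) = (j:ℕ) := by omega
    have h2 := congrArg (Nat.cast : ℕ → ℝ) h
    push_cast at h2
    linarith
  rw [hd, div_eq_iff hN0]
  have h2ne : 2 * ((n:ℝ)-2) ≠ 0 := by
    intro h
    apply hn2
    linarith [mul_ne_zero (two_ne_zero (α := ℝ)) hn2]
  apply mul_left_cancel₀ h2ne
  rw [h2A]
  field_simp
  ring
end

section
/- Let n ≥ 3 and let λ be a partition of n with a_k parts equal to k. Let X = Σ_{1≤i<j≤n} wt(i,j)·I_{i,j} be a weighted inversion statistic with real weights wt(i,j), and set α_n(X) = Σ_{1≤i<j≤n} wt(i,j) and β_n(X) = Σ_{1≤i<j≤n} (j−i−1)·wt(i,j). Then the average of X over the conjugacy class C_λ equals (1/2 + a_2/(n(n−1)) − a_1(a_1−1)/(2n(n−1)))·α_n(X) + ((n − n·a_1 − a_1 + a_1² − 2a_2)/(n(n−1)(n−2)))·β_n(X). -/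
open Finset Equiv Equiv.Perm

variable {α : Type*} [DecidableEq α] [Fintype α]

lemma fix_card_add_support (ω : Perm α) :
    (univ.filter fun i => ω i = i).card + ω.support.card = Fintype.card α := by
  classical
  rw [← Finset.card_univ, ← Finset.card_filter_add_card_filter_not
    (s := univ) (p := fun i => ω i = i)]
  rfl

lemma two_cycle_card (ω : Perm α) :
    (univ.filter fun i => ω i ≠ i ∧ ω (ω i) = i).card = 2 * ω.cycleType.count 2 := by
  classical
  set S := univ.filter fun i => ω i ≠ i ∧ ω (ω i) = i with hS
  set T := ω.cycleFactorsFinset.filter fun c => c.support.card = 2 with hT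
  have hcnt : ω.cycleType.count 2 = T.card := by
    rw [Equiv.Perm.cycleType_def, Multiset.count_map, hT, Finset.card_def, Finset.filter_val]
    congr 1
    apply Multiset.filter_congr
    intro c _
    simp [eq_comm, Function.comp]
  have hmap : ∀ i ∈ S, ω.cycleOf i ∈ T := by
    intro i hi
    simp only [hS, mem_filter, mem_univ, true_and] at hi
    obtain ⟨h1, h2⟩ := hi
    have hc : (ω.cycleOf i).IsCycle := Equiv.Perm.isCycle_cycleOf ω h1
    have hci : ω.cycleOf i i = ω i := ω.cycleOf_apply_self i
    have hsc : ω.SameCycle i (ω i) := Equiv.Perm.sameCycle_apply_right.2 (Equiv.Perm.SameCycle.refl ω i)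
    have hcfi : ω.cycleOf i (ω.cycleOf i i) = i := by
      rw [hci, hsc.cycleOf_apply, h2]
    have hne : ω.cycleOf i i ≠ i := by rw [hci]; exact h1
    have hswap := hc.eq_swap_of_apply_apply_eq_self hne hcfi
    rw [hT, mem_filter]
    refine ⟨(ω.cycleOf_mem_cycleFactorsFinset_iff).2 (Equiv.Perm.mem_support.2 h1), ?_⟩
    rw [hswap, Equiv.Perm.card_support_swap hne.symm]
  have hfiber : ∀ c ∈ T, S.filter (fun i => ω.cycleOf i = c) = c.support := by
    intro c hc
    rw [hT, mem_filter] at hc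
    obtain ⟨hcf, hc2⟩ := hc
    obtain ⟨x, y, hxy, rfl⟩ := Equiv.Perm.card_support_eq_two.1 hc2
    ext i
    simp only [hS, mem_filter, mem_univ, true_and]
    constructor
    · rintro ⟨⟨h1, h2⟩, h3⟩
      rw [← h3]
      exact Equiv.Perm.mem_support_cycleOf_iff.2 ⟨Equiv.Perm.SameCycle.refl ω i, Equiv.Perm.mem_support.2 h1⟩
    · intro hi
      have hωi : ω i = Equiv.swap x y i := ((Equiv.Perm.mem_cycleFactorsFinset_iff.1 hcf).2 i hi).symm
      have hine : Equiv.swap x y i ≠ i := Equiv.Perm.mem_support.1 hi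
      have hmem2 : Equiv.swap x y i ∈ (Equiv.swap x y).support := Equiv.Perm.apply_mem_support.2 hi
      have hωωi : ω (Equiv.swap x y i) = Equiv.swap x y (Equiv.swap x y i) :=
        ((Equiv.Perm.mem_cycleFactorsFinset_iff.1 hcf).2 _ hmem2).symm
      refine ⟨⟨by rw [hωi]; exact hine, ?_⟩, (Equiv.Perm.cycle_is_cycleOf hi hcf).symm⟩
      rw [hωi, hωωi, Equiv.swap_apply_self]
  rw [Finset.card_eq_sum_card_fiberwise hmap]
  rw [Finset.sum_congr rfl (fun c hc => by rw [hfiber c hc, (Finset.mem_filter.1 hc).2])]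
  rw [Finset.sum_const, smul_eq_mul, hcnt, mul_comm]

variable {n : ℕ} {lam : n.Partition}

lemma mem_conjClass {ω : Perm (Fin n)} :
    ω ∈ conjClass n lam ↔ ω.cycleType = Multiset.filter (fun i => i ≠ 1) lam.parts := by
  simp [conjClass]

lemma conj_mem_conjClass (σ : Perm (Fin n)) {ω : Perm (Fin n)} (h : ω ∈ conjClass n lam) :
    σ * ω * σ⁻¹ ∈ conjClass n lam := by
  rw [mem_conjClass] at h ⊢
  rw [Equiv.Perm.cycleType_conj, h]

noncomputable def cnt2 (lam : n.Partition) (i j a b : Fin n) : ℕ :=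
  ((conjClass n lam).filter fun ω => ω i = a ∧ ω j = b).card

noncomputable def cnt1 (lam : n.Partition) (i a : Fin n) : ℕ :=
  ((conjClass n lam).filter fun ω => ω i = a).card

lemma cnt2_conj (σ : Perm (Fin n)) (i j a b : Fin n) :
    cnt2 lam i j a b = cnt2 lam (σ i) (σ j) (σ a) (σ b) := by
  classical
  refine Finset.card_bij' (fun ω _ => σ * ω * σ⁻¹) (fun ω _ => σ⁻¹ * ω * σ) ?_ ?_ ?_ ?_
  · intro ω hω
    rw [mem_filter] at hω ⊢
    refine ⟨conj_mem_conjClass σ hω.1, ?_, ?_⟩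
    · simp [Equiv.Perm.mul_apply, hω.2.1]
    · simp [Equiv.Perm.mul_apply, hω.2.2]
  · intro ω hω
    rw [mem_filter] at hω ⊢
    have h1 : σ⁻¹ * ω * σ ∈ conjClass n lam := by
      have := conj_mem_conjClass σ⁻¹ hω.1
      simpa using this
    refine ⟨h1, ?_, ?_⟩
    · have := hω.2.1
      simp only [Equiv.Perm.mul_apply]
      rw [this]
      simp
    · have := hω.2.2
      simp only [Equiv.Perm.mul_apply]
      rw [this]
      simp
  · intro ω _; group
  · intro ω _; group

lemma cnt1_conj (σ : Perm (Fin n)) (i a : Fin n) :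
    cnt1 lam i a = cnt1 lam (σ i) (σ a) := by
  classical
  refine Finset.card_bij' (fun ω _ => σ * ω * σ⁻¹) (fun ω _ => σ⁻¹ * ω * σ) ?_ ?_ ?_ ?_
  · intro ω hω
    rw [mem_filter] at hω ⊢
    refine ⟨conj_mem_conjClass σ hω.1, by simp [Equiv.Perm.mul_apply, hω.2]⟩
  · intro ω hω
    rw [mem_filter] at hω ⊢
    have h1 : σ⁻¹ * ω * σ ∈ conjClass n lam := by
      have := conj_mem_conjClass σ⁻¹ hω.1
      simpa using this
    refine ⟨h1, ?_⟩
    have := hω.2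
    simp only [Equiv.Perm.mul_apply]
    rw [this]
    simp
  · intro ω _; group
  · intro ω _; group

lemma exists_perm_two {i j i' j' : Fin n} (h : i ≠ j) (h' : i' ≠ j') :
    ∃ σ : Perm (Fin n), σ i = i' ∧ σ j = j' := by
  classical
  set τ := Equiv.swap i i' with hτ
  have hτi : τ i = i' := Equiv.swap_apply_left i i'
  have hne : τ j ≠ i' := by
    rw [← hτi]; exact fun hc => h (τ.injective hc).symm
  refine ⟨Equiv.swap (τ j) j' * τ, ?_, ?_⟩
  · simp only [Equiv.Perm.mul_apply, hτi]
    exact Equiv.swap_apply_of_ne_of_ne hne.symm h'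
  · simp [Equiv.Perm.mul_apply]

lemma filter_sum_eq (lam : n.Partition) :
    (Multiset.filter (fun i => i ≠ 1) lam.parts).sum + Multiset.count 1 lam.parts = n := by
  classical
  have h1 : (Multiset.filter (fun i => ¬ i ≠ 1) lam.parts) = Multiset.filter (fun i => i = 1) lam.parts := by
    apply Multiset.filter_congr; intro x _; tauto
  have h2 : (Multiset.filter (fun i => i = 1) lam.parts) =
      Multiset.replicate (Multiset.count 1 lam.parts) 1 := by
    rw [← Multiset.filter_eq']
  have := Multiset.sum_filter_add_sum_filter_not (p := fun i => i ≠ 1) (s := lam.parts)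
  rw [h1, h2] at this
  rw [Multiset.sum_replicate, smul_eq_mul, mul_one] at this
  rw [this, lam.parts_sum]

section Class

variable (hn : 3 ≤ n) {a1 a2 : ℕ}
  (ha1 : a1 = Multiset.count 1 lam.parts) (ha2 : a2 = Multiset.count 2 lam.parts)

include ha1 in
lemma a1_le_n : a1 ≤ n := by
  have := filter_sum_eq lam
  omega

include ha1 in
lemma fix_card_class {ω : Perm (Fin n)} (hω : ω ∈ conjClass n lam) :
    (univ.filter fun i => ω i = i).card = a1 := by
  have h1 := fix_card_add_support ω
  have h2 : ω.support.card = ω.cycleType.sum := (Equiv.Perm.sum_cycleType ω).symm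
  rw [mem_conjClass] at hω
  have h3 := filter_sum_eq lam
  rw [hω] at h2
  simp only [Fintype.card_fin] at h1
  omega

include ha1 in
lemma support_card_class {ω : Perm (Fin n)} (hω : ω ∈ conjClass n lam) :
    ω.support.card = n - a1 := by
  have h1 := fix_card_add_support ω
  have h2 := fix_card_class (lam := lam) ha1 hω
  simp only [Fintype.card_fin] at h1
  omega

include ha2 in
lemma two_cycle_card_class {ω : Perm (Fin n)} (hω : ω ∈ conjClass n lam) :
    (univ.filter fun i => ω i ≠ i ∧ ω (ω i) = i).card = 2 * a2 := by
  rw [two_cycle_card]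
  rw [mem_conjClass] at hω
  rw [hω, Multiset.count_filter]
  simp [ha2]

lemma conjClass_nonempty : (conjClass n lam).Nonempty := by
  classical
  have h : ∃ g : Perm (Fin n), g.cycleType = Multiset.filter (fun i => i ≠ 1) lam.parts := by
    rw [Equiv.Perm.exists_with_cycleType_iff]
    constructor
    · rw [Fintype.card_fin]
      have := filter_sum_eq lam
      omega
    · intro a ha
      rw [Multiset.mem_filter] at ha
      have := lam.parts_pos ha.1
      omega
  obtain ⟨g, hg⟩ := h
  exact ⟨g, mem_conjClass.2 hg⟩

end Class

lemma sum_card_filter_eq {ι κ : Type*} (s : Finset ι) (t : Finset κ) (P : ι → κ → Prop)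
    [∀ x y, Decidable (P x y)] :
    ∑ x ∈ s, (t.filter (fun y => P x y)).card = ∑ y ∈ t, (s.filter (fun x => P x y)).card := by
  simp_rw [Finset.card_filter]
  rw [Finset.sum_comm]

section Global

variable {a1 a2 : ℕ}
  (ha1 : a1 = Multiset.count 1 lam.parts) (ha2 : a2 = Multiset.count 2 lam.parts)

include ha1 in
lemma E14 (i : Fin n) : n * cnt1 lam i i = a1 * (conjClass n lam).card := by
  classical
  have hconst : ∀ i' : Fin n, cnt1 lam i' i' = cnt1 lam i i := by
    intro i'
    by_cases h : i' = i
    · rw [h]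
    · have := cnt1_conj (lam := lam) (Equiv.swap i' i) i' i'
      simpa [Equiv.swap_apply_left] using this
  have hsum : ∑ i' : Fin n, cnt1 lam i' i' = a1 * (conjClass n lam).card := by
    unfold cnt1
    rw [sum_card_filter_eq]
    rw [Finset.sum_congr rfl (fun ω hω => fix_card_class (lam := lam) ha1 hω)]
    rw [Finset.sum_const, smul_eq_mul, mul_comm]
  rw [← hsum, Finset.sum_congr rfl (fun i' _ => hconst i'), Finset.sum_const, smul_eq_mul]
  simp

include ha1 in
lemma E15 {i j : Fin n} (hij : i ≠ j) :
    (n * n - n) * cnt2 lam i j i j + a1 * (conjClass n lam).card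
      = a1 * a1 * (conjClass n lam).card := by
  classical
  have hconst : ∀ p ∈ (univ : Finset (Fin n)).offDiag,
      cnt2 lam p.1 p.2 p.1 p.2 = cnt2 lam i j i j := by
    rintro ⟨u, v⟩ hp
    rw [Finset.mem_offDiag] at hp
    obtain ⟨σ, hσ1, hσ2⟩ := exists_perm_two hp.2.2 hij
    have := cnt2_conj (lam := lam) σ u v u v
    simpa [hσ1, hσ2] using this
  have hsum : ∑ p ∈ (univ : Finset (Fin n)).offDiag, cnt2 lam p.1 p.2 p.1 p.2
      + a1 * (conjClass n lam).card = a1 * a1 * (conjClass n lam).card := by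
    unfold cnt2
    rw [sum_card_filter_eq]
    have hin : ∀ ω ∈ conjClass n lam,
        ((univ : Finset (Fin n)).offDiag.filter fun p => ω p.1 = p.1 ∧ ω p.2 = p.2).card
          + a1 = a1 * a1 := by
      intro ω hω
      have hset : (univ : Finset (Fin n)).offDiag.filter (fun p => ω p.1 = p.1 ∧ ω p.2 = p.2)
          = (univ.filter fun u => ω u = u).offDiag := by
        ext ⟨u, v⟩
        simp only [Finset.mem_filter, Finset.mem_offDiag, Finset.mem_univ, true_and]
        tauto
      rw [hset, Finset.offDiag_card, fix_card_class (lam := lam) ha1 hω]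
      have : a1 ≤ a1 * a1 := by nlinarith
      omega
    calc ∑ ω ∈ conjClass n lam,
          ((univ : Finset (Fin n)).offDiag.filter fun p => ω p.1 = p.1 ∧ ω p.2 = p.2).card
          + a1 * (conjClass n lam).card
        = ∑ ω ∈ conjClass n lam,
          (((univ : Finset (Fin n)).offDiag.filter fun p => ω p.1 = p.1 ∧ ω p.2 = p.2).card + a1) := by
          rw [Finset.sum_add_distrib, Finset.sum_const, smul_eq_mul, mul_comm]
      _ = ∑ _ω ∈ conjClass n lam, a1 * a1 := Finset.sum_congr rfl fun ω hω => hin ω hω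
      _ = a1 * a1 * (conjClass n lam).card := by rw [Finset.sum_const, smul_eq_mul, mul_comm]
  rw [← hsum, Finset.sum_congr rfl hconst, Finset.sum_const, smul_eq_mul]
  congr 2
  rw [Finset.offDiag_card]
  simp [Finset.card_univ]

include ha2 in
lemma E16 {i j : Fin n} (hij : i ≠ j) :
    (n * n - n) * cnt2 lam i j j i = 2 * a2 * (conjClass n lam).card := by
  classical
  have hconst : ∀ p ∈ (univ : Finset (Fin n)).offDiag,
      cnt2 lam p.1 p.2 p.2 p.1 = cnt2 lam i j j i := by
    rintro ⟨u, v⟩ hp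
    rw [Finset.mem_offDiag] at hp
    obtain ⟨σ, hσ1, hσ2⟩ := exists_perm_two hp.2.2 hij
    have := cnt2_conj (lam := lam) σ u v v u
    simpa [hσ1, hσ2] using this
  have hsum : ∑ p ∈ (univ : Finset (Fin n)).offDiag, cnt2 lam p.1 p.2 p.2 p.1
      = 2 * a2 * (conjClass n lam).card := by
    unfold cnt2
    rw [sum_card_filter_eq]
    have hin : ∀ ω ∈ conjClass n lam,
        ((univ : Finset (Fin n)).offDiag.filter fun p => ω p.1 = p.2 ∧ ω p.2 = p.1).card
          = 2 * a2 := by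
      intro ω hω
      rw [← two_cycle_card_class (lam := lam) ha2 hω]
      refine Finset.card_bij' (fun p _ => p.1) (fun u _ => (u, ω u)) ?_ ?_ ?_ ?_
      · rintro ⟨u, v⟩ hp
        simp only [Finset.mem_filter, Finset.mem_offDiag, Finset.mem_univ, true_and] at hp
        simp only [Finset.mem_filter, Finset.mem_univ, true_and]
        refine ⟨by rw [hp.2.1]; exact hp.1.symm, by rw [hp.2.1, hp.2.2]⟩
      · intro u hu
        simp only [Finset.mem_filter, Finset.mem_univ, true_and] at hu
        simp only [Finset.mem_filter, Finset.mem_offDiag, Finset.mem_univ, true_and]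
        exact ⟨fun hc => hu.1 hc.symm, by simp [hu.2]⟩
      · rintro ⟨u, v⟩ hp
        simp only [Finset.mem_filter, Finset.mem_offDiag, Finset.mem_univ, true_and] at hp
        simp [hp.2.1]
      · intro u _; rfl
    rw [Finset.sum_congr rfl hin, Finset.sum_const, smul_eq_mul, mul_comm]
  rw [← hsum, Finset.sum_congr rfl hconst, Finset.sum_const, smul_eq_mul]
  congr 2
  rw [Finset.offDiag_card]
  simp [Finset.card_univ]

include ha1 in
lemma E17 {i j : Fin n} (hij : i ≠ j) :
    (n * n - n) * cnt1 lam i j + a1 * (conjClass n lam).card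
      = n * (conjClass n lam).card := by
  classical
  have hconst : ∀ p ∈ (univ : Finset (Fin n)).offDiag,
      cnt1 lam p.1 p.2 = cnt1 lam i j := by
    rintro ⟨u, v⟩ hp
    rw [Finset.mem_offDiag] at hp
    obtain ⟨σ, hσ1, hσ2⟩ := exists_perm_two hp.2.2 hij
    have := cnt1_conj (lam := lam) σ u v
    simpa [hσ1, hσ2] using this
  have hsum : ∑ p ∈ (univ : Finset (Fin n)).offDiag, cnt1 lam p.1 p.2
      + a1 * (conjClass n lam).card = n * (conjClass n lam).card := by
    unfold cnt1
    rw [sum_card_filter_eq]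
    have hin : ∀ ω ∈ conjClass n lam,
        ((univ : Finset (Fin n)).offDiag.filter fun p => ω p.1 = p.2).card + a1 = n := by
      intro ω hω
      have hcard : ((univ : Finset (Fin n)).offDiag.filter fun p => ω p.1 = p.2).card
          = ω.support.card := by
        refine Finset.card_bij' (fun p _ => p.1) (fun u _ => (u, ω u)) ?_ ?_ ?_ ?_
        · rintro ⟨u, v⟩ hp
          simp only [Finset.mem_filter, Finset.mem_offDiag, Finset.mem_univ, true_and] at hp
          rw [Equiv.Perm.mem_support, hp.2]
          exact hp.1.symm
        · intro u hu
          rw [Equiv.Perm.mem_support] at hu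
          simp only [Finset.mem_filter, Finset.mem_offDiag, Finset.mem_univ, true_and]
          exact ⟨fun hc => hu hc.symm, by simp⟩
        · rintro ⟨u, v⟩ hp
          simp only [Finset.mem_filter, Finset.mem_offDiag, Finset.mem_univ, true_and] at hp
          simp [hp.2]
        · intro u _; rfl
      rw [hcard, support_card_class (lam := lam) ha1 hω]
      have := a1_le_n (lam := lam) ha1
      omega
    calc ∑ ω ∈ conjClass n lam,
          ((univ : Finset (Fin n)).offDiag.filter fun p => ω p.1 = p.2).card
          + a1 * (conjClass n lam).card
        = ∑ ω ∈ conjClass n lam,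
          (((univ : Finset (Fin n)).offDiag.filter fun p => ω p.1 = p.2).card + a1) := by
          rw [Finset.sum_add_distrib, Finset.sum_const, smul_eq_mul, mul_comm]
      _ = ∑ _ω ∈ conjClass n lam, n := Finset.sum_congr rfl fun ω hω => hin ω hω
      _ = n * (conjClass n lam).card := by rw [Finset.sum_const, smul_eq_mul, mul_comm]
  rw [← hsum, Finset.sum_congr rfl hconst, Finset.sum_const, smul_eq_mul]
  congr 2
  rw [Finset.offDiag_card]
  simp [Finset.card_univ]

end Global

lemma card_filter_split {γ : Type*} (s : Finset γ) (p q : γ → Prop)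
    [DecidablePred p] [DecidablePred q] :
    (s.filter p).card = (s.filter fun x => p x ∧ q x).card
      + (s.filter fun x => p x ∧ ¬ q x).card := by
  rw [← Finset.card_filter_add_card_filter_not (s := s.filter p) (p := q),
    Finset.filter_filter, Finset.filter_filter]

lemma sum_const_of_pairwise_eq {γ : Type*} {s t : Finset γ} (F : γ → ℕ) (hst : s ⊆ t)
    (hc : ∀ b ∈ t, ∀ b' ∈ t, F b = F b') :
    (∑ b ∈ s, F b) * t.card = s.card * ∑ b ∈ t, F b := by
  calc (∑ b ∈ s, F b) * t.card = ∑ b ∈ s, ∑ _b' ∈ t, F b := by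
        rw [Finset.sum_mul]
        exact Finset.sum_congr rfl fun b _ => by rw [Finset.sum_const, smul_eq_mul, mul_comm]
    _ = ∑ b ∈ s, ∑ b' ∈ t, F b' :=
        Finset.sum_congr rfl fun b hb => Finset.sum_congr rfl fun b' hb' => hc b (hst hb) b' hb'
    _ = s.card * ∑ b' ∈ t, F b' := by rw [Finset.sum_const, smul_eq_mul]

section PerPair

variable (i j : Fin n)

lemma lemA (a : Fin n) (Q : Fin n → Prop) [DecidablePred Q] :
    ((conjClass n lam).filter fun ω => ω i = a ∧ Q (ω j)).card
      = ∑ b ∈ univ.filter Q, cnt2 lam i j a b := by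
  classical
  rw [Finset.card_eq_sum_card_fiberwise (f := fun ω => ω j) (t := univ.filter Q)
    (fun ω hω => by simp only [Finset.mem_coe, mem_filter] at hω ⊢; exact ⟨mem_univ _, hω.2.2⟩)]
  refine Finset.sum_congr rfl fun b hb => ?_
  rw [mem_filter] at hb
  rw [Finset.filter_filter]
  unfold cnt2
  congr 1
  apply Finset.filter_congr
  intro ω _
  constructor
  · rintro ⟨⟨h1, _⟩, h2⟩; exact ⟨h1, h2⟩
  · rintro ⟨h1, h2⟩; exact ⟨⟨h1, h2 ▸ hb.2⟩, h2⟩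

lemma lemB (b : Fin n) (Q : Fin n → Prop) [DecidablePred Q] :
    ((conjClass n lam).filter fun ω => Q (ω i) ∧ ω j = b).card
      = ∑ a ∈ univ.filter Q, cnt2 lam i j a b := by
  classical
  rw [Finset.card_eq_sum_card_fiberwise (f := fun ω => ω i) (t := univ.filter Q)
    (fun ω hω => by simp only [Finset.mem_coe, mem_filter] at hω ⊢; exact ⟨mem_univ _, hω.2.1⟩)]
  refine Finset.sum_congr rfl fun a ha => ?_
  rw [mem_filter] at ha
  rw [Finset.filter_filter]
  unfold cnt2
  congr 1
  apply Finset.filter_congr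
  intro ω _
  constructor
  · rintro ⟨⟨_, h1⟩, h2⟩; exact ⟨h2, h1⟩
  · rintro ⟨h1, h2⟩; exact ⟨⟨h1 ▸ ha.2, h2⟩, h1⟩

lemma lemG (R : Fin n × Fin n → Prop) [DecidablePred R] :
    ((conjClass n lam).filter fun ω => R (ω i, ω j)).card
      = ∑ q ∈ (univ ×ˢ univ).filter R, cnt2 lam i j q.1 q.2 := by
  classical
  rw [Finset.card_eq_sum_card_fiberwise (f := fun ω => (ω i, ω j))
    (t := (univ ×ˢ univ).filter R)
    (fun ω hω => by
      simp only [Finset.mem_coe, mem_filter] at hω ⊢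
      exact ⟨by simp [Finset.mem_product], hω.2⟩)]
  refine Finset.sum_congr rfl fun q hq => ?_
  rw [mem_filter] at hq
  rw [Finset.filter_filter]
  unfold cnt2
  congr 1
  apply Finset.filter_congr
  intro ω _
  constructor
  · rintro ⟨_, h2⟩
    exact ⟨congrArg Prod.fst h2, congrArg Prod.snd h2⟩
  · rintro ⟨h1, h2⟩
    have : (ω i, ω j) = q := Prod.ext h1 h2
    exact ⟨this ▸ hq.2, this⟩

end PerPair

section PerPair2

variable (lam)

noncomputable def T1v (i j : Fin n) : ℕ :=
  ∑ b ∈ univ.filter (fun b => b ≠ i ∧ b ≠ j), cnt2 lam i j i b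
noncomputable def T2v (i j : Fin n) : ℕ :=
  ∑ a ∈ univ.filter (fun a => a ≠ i ∧ a ≠ j), cnt2 lam i j a j
noncomputable def T3v (i j : Fin n) : ℕ :=
  ∑ b ∈ univ.filter (fun b => b ≠ i ∧ b ≠ j), cnt2 lam i j j b
noncomputable def T4v (i j : Fin n) : ℕ :=
  ∑ a ∈ univ.filter (fun a => a ≠ i ∧ a ≠ j), cnt2 lam i j a i
noncomputable def S1v (i j : Fin n) : ℕ :=
  ∑ b ∈ univ.filter (fun b => b < i), cnt2 lam i j i b
noncomputable def S2v (i j : Fin n) : ℕ :=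
  ∑ a ∈ univ.filter (fun a => j < a), cnt2 lam i j a j
noncomputable def S3v (i j : Fin n) : ℕ :=
  ∑ b ∈ univ.filter (fun b => b < j ∧ b ≠ i), cnt2 lam i j j b
noncomputable def S4v (i j : Fin n) : ℕ :=
  ∑ a ∈ univ.filter (fun a => i < a ∧ a ≠ j), cnt2 lam i j a i
noncomputable def Sgv (i j : Fin n) : ℕ :=
  ∑ q ∈ (univ ×ˢ univ).filter
    (fun q : Fin n × Fin n => q.2 < q.1 ∧ q.1 ≠ i ∧ q.1 ≠ j ∧ q.2 ≠ i ∧ q.2 ≠ j),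
    cnt2 lam i j q.1 q.2
noncomputable def Sg2v (i j : Fin n) : ℕ :=
  ∑ q ∈ (univ ×ˢ univ).filter
    (fun q : Fin n × Fin n => q.1 ≠ i ∧ q.1 ≠ j ∧ q.2 ≠ i ∧ q.2 ≠ j),
    cnt2 lam i j q.1 q.2

variable {lam} {i j : Fin n}

lemma P12 : cnt1 lam j j = cnt1 lam i i := by
  have := cnt1_conj (lam := lam) (Equiv.swap j i) j j
  simpa [Equiv.swap_apply_left] using this

lemma P13 : cnt1 lam j i = cnt1 lam i j := by
  have := cnt1_conj (lam := lam) (Equiv.swap i j) j i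
  simpa [Equiv.swap_apply_left, Equiv.swap_apply_right] using this

lemma P4 (hij : i ≠ j) : cnt1 lam i i = cnt2 lam i j i j + T1v lam i j := by
  classical
  unfold cnt1
  rw [card_filter_split (conjClass n lam) _ (fun ω => ω j = j)]
  congr 1
  have hcong : (conjClass n lam).filter (fun ω => ω i = i ∧ ¬ ω j = j)
      = (conjClass n lam).filter (fun ω => ω i = i ∧ (ω j ≠ i ∧ ω j ≠ j)) := by
    apply Finset.filter_congr
    intro ω _
    constructor
    · rintro ⟨h1, h2⟩
      exact ⟨h1, fun hc => hij (ω.injective (h1.symm ▸ hc : ω j = ω i)).symm, h2⟩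
    · rintro ⟨h1, _, h2⟩; exact ⟨h1, h2⟩
  rw [hcong, lemA i j i (fun b => b ≠ i ∧ b ≠ j)]
  rfl

lemma P5 (hij : i ≠ j) : cnt1 lam j j = cnt2 lam i j i j + T2v lam i j := by
  classical
  unfold cnt1
  rw [card_filter_split (conjClass n lam) _ (fun ω => ω i = i)]
  have h1 : (conjClass n lam).filter (fun ω => ω j = j ∧ ω i = i)
      = (conjClass n lam).filter (fun ω => ω i = i ∧ ω j = j) := by
    apply Finset.filter_congr; intro ω _; tauto
  have h2 : (conjClass n lam).filter (fun ω => ω j = j ∧ ¬ ω i = i)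
      = (conjClass n lam).filter (fun ω => (ω i ≠ i ∧ ω i ≠ j) ∧ ω j = j) := by
    apply Finset.filter_congr
    intro ω _
    constructor
    · rintro ⟨h1, h2⟩
      exact ⟨⟨h2, fun hc => hij (ω.injective (h1.symm ▸ hc : ω i = ω j))⟩, h1⟩
    · rintro ⟨⟨h2, _⟩, h1⟩; exact ⟨h1, h2⟩
  rw [h1, h2, lemB i j j (fun a => a ≠ i ∧ a ≠ j)]
  rfl

lemma P6 (hij : i ≠ j) : cnt1 lam i j = cnt2 lam i j j i + T3v lam i j := by
  classical
  unfold cnt1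
  rw [card_filter_split (conjClass n lam) _ (fun ω => ω j = i)]
  have h2 : (conjClass n lam).filter (fun ω => ω i = j ∧ ¬ ω j = i)
      = (conjClass n lam).filter (fun ω => ω i = j ∧ (ω j ≠ i ∧ ω j ≠ j)) := by
    apply Finset.filter_congr
    intro ω _
    constructor
    · rintro ⟨h1, h2⟩
      exact ⟨h1, h2, fun hc => hij (ω.injective (h1.symm ▸ hc : ω j = ω i)).symm⟩
    · rintro ⟨h1, h2, _⟩; exact ⟨h1, h2⟩
  rw [h2, lemA i j j (fun b => b ≠ i ∧ b ≠ j)]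
  rfl

lemma P7 (hij : i ≠ j) : cnt1 lam j i = cnt2 lam i j j i + T4v lam i j := by
  classical
  unfold cnt1
  rw [card_filter_split (conjClass n lam) _ (fun ω => ω i = j)]
  have h1 : (conjClass n lam).filter (fun ω => ω j = i ∧ ω i = j)
      = (conjClass n lam).filter (fun ω => ω i = j ∧ ω j = i) := by
    apply Finset.filter_congr; intro ω _; tauto
  have h2 : (conjClass n lam).filter (fun ω => ω j = i ∧ ¬ ω i = j)
      = (conjClass n lam).filter (fun ω => (ω i ≠ i ∧ ω i ≠ j) ∧ ω j = i) := by
    apply Finset.filter_congr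
    intro ω _
    constructor
    · rintro ⟨h1, h2⟩
      exact ⟨⟨fun hc => hij (ω.injective (h1.symm ▸ hc : ω i = ω j)), h2⟩, h1⟩
    · rintro ⟨⟨_, h2⟩, h1⟩; exact ⟨h1, h2⟩
  rw [h1, h2, lemB i j i (fun a => a ≠ i ∧ a ≠ j)]
  rfl

end PerPair2

section PerPair3

variable {i j : Fin n}

lemma card_lt_left (hij : i < j) : (univ.filter fun b : Fin n => b < i).card = (i : ℕ) := by
  have h : (univ.filter fun b : Fin n => b < i) = Finset.Iio i := by
    ext b; simp
  rw [h, Fin.card_Iio]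

lemma card_gt_right : (univ.filter fun a : Fin n => j < a).card = n - 1 - (j : ℕ) := by
  have h : (univ.filter fun a : Fin n => j < a) = Finset.Ioi j := by
    ext a; simp
  rw [h, Fin.card_Ioi]

lemma card_ne_two (hij : i ≠ j) :
    (univ.filter fun b : Fin n => b ≠ i ∧ b ≠ j).card = n - 2 := by
  have h : (univ.filter fun b : Fin n => b ≠ i ∧ b ≠ j) = (univ.erase i).erase j := by
    ext b; simp [and_comm]
  rw [h, Finset.card_erase_of_mem (Finset.mem_erase.2 ⟨hij.symm, mem_univ j⟩),
    Finset.card_erase_of_mem (mem_univ i), Finset.card_univ, Fintype.card_fin]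
  omega

lemma card_lt_ne (hij : i < j) :
    (univ.filter fun b : Fin n => b < j ∧ b ≠ i).card = (j : ℕ) - 1 := by
  have h : (univ.filter fun b : Fin n => b < j ∧ b ≠ i) = (Finset.Iio j).erase i := by
    ext b; simp [and_comm]
  rw [h, Finset.card_erase_of_mem (Finset.mem_Iio.2 hij), Fin.card_Iio]

lemma card_gt_ne (hij : i < j) :
    (univ.filter fun a : Fin n => i < a ∧ a ≠ j).card = n - 2 - (i : ℕ) := by
  have h : (univ.filter fun a : Fin n => i < a ∧ a ≠ j) = (Finset.Ioi i).erase j := by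
    ext a; simp [and_comm]
  rw [h, Finset.card_erase_of_mem (Finset.mem_Ioi.2 hij), Fin.card_Ioi]
  omega

lemma cnt2_swap_right (hij : i ≠ j) {b b' : Fin n} (hb : b ≠ i ∧ b ≠ j)
    (hb' : b' ≠ i ∧ b' ≠ j) (x : Fin n) (hx : x = i ∨ x = j) :
    cnt2 lam i j x b = cnt2 lam i j x b' := by
  by_cases hbb : b = b'
  · rw [hbb]
  · have hsi : Equiv.swap b b' i = i := Equiv.swap_apply_of_ne_of_ne (Ne.symm hb.1) (Ne.symm hb'.1)
    have hsj : Equiv.swap b b' j = j := Equiv.swap_apply_of_ne_of_ne (Ne.symm hb.2) (Ne.symm hb'.2)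
    have hsx : Equiv.swap b b' x = x := by
      rcases hx with h | h <;> rw [h]
      exacts [hsi, hsj]
    have := cnt2_conj (lam := lam) (Equiv.swap b b') i j x b
    rwa [hsi, hsj, hsx, Equiv.swap_apply_left] at this

lemma cnt2_swap_left (hij : i ≠ j) {a a' : Fin n} (ha : a ≠ i ∧ a ≠ j)
    (ha' : a' ≠ i ∧ a' ≠ j) (x : Fin n) (hx : x = i ∨ x = j) :
    cnt2 lam i j a x = cnt2 lam i j a' x := by
  by_cases haa : a = a'
  · rw [haa]
  · have hsi : Equiv.swap a a' i = i := Equiv.swap_apply_of_ne_of_ne (Ne.symm ha.1) (Ne.symm ha'.1)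
    have hsj : Equiv.swap a a' j = j := Equiv.swap_apply_of_ne_of_ne (Ne.symm ha.2) (Ne.symm ha'.2)
    have hsx : Equiv.swap a a' x = x := by
      rcases hx with h | h <;> rw [h]
      exacts [hsi, hsj]
    have := cnt2_conj (lam := lam) (Equiv.swap a a') i j a x
    rwa [hsi, hsj, hsx, Equiv.swap_apply_left] at this

lemma P8 (hij : i < j) : S1v lam i j * (n - 2) = (i : ℕ) * T1v lam i j := by
  have hne : i ≠ j := ne_of_lt hij
  have := sum_const_of_pairwise_eq (s := univ.filter fun b : Fin n => b < i)
    (t := univ.filter fun b : Fin n => b ≠ i ∧ b ≠ j) (fun b => cnt2 lam i j i b)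
    (fun b hb => by
      simp only [mem_filter, mem_univ, true_and] at hb ⊢
      exact ⟨ne_of_lt hb, ne_of_lt (lt_trans hb hij)⟩)
    (fun b hb b' hb' => by
      simp only [mem_filter, mem_univ, true_and] at hb hb'
      exact cnt2_swap_right hne hb hb' i (Or.inl rfl))
  rw [card_ne_two hne, card_lt_left hij] at this
  exact this

lemma P9 (hij : i < j) : S2v lam i j * (n - 2) = (n - 1 - (j : ℕ)) * T2v lam i j := by
  have hne : i ≠ j := ne_of_lt hij
  have := sum_const_of_pairwise_eq (s := univ.filter fun a : Fin n => j < a)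
    (t := univ.filter fun a : Fin n => a ≠ i ∧ a ≠ j) (fun a => cnt2 lam i j a j)
    (fun a ha => by
      simp only [mem_filter, mem_univ, true_and] at ha ⊢
      exact ⟨(ne_of_lt (lt_trans hij ha)).symm, (ne_of_lt ha).symm⟩)
    (fun a ha a' ha' => by
      simp only [mem_filter, mem_univ, true_and] at ha ha'
      exact cnt2_swap_left hne ha ha' j (Or.inr rfl))
  rw [card_ne_two hne, card_gt_right] at this
  exact this

lemma P10 (hij : i < j) : S3v lam i j * (n - 2) = ((j : ℕ) - 1) * T3v lam i j := by
  have hne : i ≠ j := ne_of_lt hij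
  have := sum_const_of_pairwise_eq (s := univ.filter fun b : Fin n => b < j ∧ b ≠ i)
    (t := univ.filter fun b : Fin n => b ≠ i ∧ b ≠ j) (fun b => cnt2 lam i j j b)
    (fun b hb => by
      simp only [mem_filter, mem_univ, true_and] at hb ⊢
      exact ⟨hb.2, ne_of_lt hb.1⟩)
    (fun b hb b' hb' => by
      simp only [mem_filter, mem_univ, true_and] at hb hb'
      exact cnt2_swap_right hne hb hb' j (Or.inr rfl))
  rw [card_ne_two hne, card_lt_ne hij] at this
  exact this

lemma P11 (hij : i < j) : S4v lam i j * (n - 2) = (n - 2 - (i : ℕ)) * T4v lam i j := by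
  have hne : i ≠ j := ne_of_lt hij
  have := sum_const_of_pairwise_eq (s := univ.filter fun a : Fin n => i < a ∧ a ≠ j)
    (t := univ.filter fun a : Fin n => a ≠ i ∧ a ≠ j) (fun a => cnt2 lam i j a i)
    (fun a ha => by
      simp only [mem_filter, mem_univ, true_and] at ha ⊢
      exact ⟨(ne_of_lt ha.1).symm, ha.2⟩)
    (fun a ha a' ha' => by
      simp only [mem_filter, mem_univ, true_and] at ha ha'
      exact cnt2_swap_left hne ha ha' i (Or.inl rfl))
  rw [card_ne_two hne, card_gt_ne hij] at this
  exact this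

end PerPair3

section PerPair4

variable {i j : Fin n}

lemma P2 (hij : i ≠ j) :
    (conjClass n lam).card =
      cnt1 lam i i + cnt1 lam i j + T4v lam i j + T2v lam i j + Sg2v lam i j := by
  classical
  have h0 := (Finset.card_filter_add_card_filter_not
    (s := conjClass n lam) (p := fun ω => ω i = i)).symm
  have hB := card_filter_split (conjClass n lam) (fun ω => ¬ ω i = i) (fun ω => ω i = j)
  have hB1 : ((conjClass n lam).filter fun ω => ¬ ω i = i ∧ ω i = j).card = cnt1 lam i j := by
    unfold cnt1
    congr 1
    apply Finset.filter_congr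
    intro ω _
    constructor
    · rintro ⟨_, h⟩; exact h
    · intro h; exact ⟨fun hc => hij (by rw [← hc, h]), h⟩
  have hB2 := card_filter_split (conjClass n lam)
    (fun ω => (¬ ω i = i ∧ ¬ ω i = j)) (fun ω => ω j = i)
  have hB2' : ((conjClass n lam).filter fun ω => ¬ ω i = i ∧ ¬ ω i = j).card
      = ((conjClass n lam).filter fun ω => (¬ ω i = i ∧ ¬ ω i = j) ∧ ω j = i).card
        + ((conjClass n lam).filter fun ω => (¬ ω i = i ∧ ¬ ω i = j) ∧ ¬ ω j = i).card := hB2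
  have hB3 : ((conjClass n lam).filter fun ω => (¬ ω i = i ∧ ¬ ω i = j) ∧ ω j = i).card
      = T4v lam i j := by
    rw [show ((conjClass n lam).filter fun ω => (¬ ω i = i ∧ ¬ ω i = j) ∧ ω j = i)
        = ((conjClass n lam).filter fun ω => (fun a => a ≠ i ∧ a ≠ j) (ω i) ∧ ω j = i) from rfl]
    rw [lemB i j i (fun a => a ≠ i ∧ a ≠ j)]
    rfl
  have hB4 := card_filter_split (conjClass n lam)
    (fun ω => ((¬ ω i = i ∧ ¬ ω i = j) ∧ ¬ ω j = i)) (fun ω => ω j = j)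
  have hB5 : ((conjClass n lam).filter fun ω => ((¬ ω i = i ∧ ¬ ω i = j) ∧ ¬ ω j = i) ∧ ω j = j).card
      = T2v lam i j := by
    have hcong : ((conjClass n lam).filter fun ω => ((¬ ω i = i ∧ ¬ ω i = j) ∧ ¬ ω j = i) ∧ ω j = j)
        = ((conjClass n lam).filter fun ω => (fun a => a ≠ i ∧ a ≠ j) (ω i) ∧ ω j = j) := by
      apply Finset.filter_congr
      intro ω _
      constructor
      · rintro ⟨⟨h1, _⟩, h2⟩; exact ⟨h1, h2⟩
      · rintro ⟨h1, h2⟩; exact ⟨⟨h1, fun hc => hij.symm (by rw [← hc, h2])⟩, h2⟩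
    rw [hcong, lemB i j j (fun a => a ≠ i ∧ a ≠ j)]
    rfl
  have hB6 : ((conjClass n lam).filter
        fun ω => ((¬ ω i = i ∧ ¬ ω i = j) ∧ ¬ ω j = i) ∧ ¬ ω j = j).card
      = Sg2v lam i j := by
    have hcong : ((conjClass n lam).filter
          fun ω => ((¬ ω i = i ∧ ¬ ω i = j) ∧ ¬ ω j = i) ∧ ¬ ω j = j)
        = ((conjClass n lam).filter fun ω =>
            (fun q : Fin n × Fin n => q.1 ≠ i ∧ q.1 ≠ j ∧ q.2 ≠ i ∧ q.2 ≠ j) (ω i, ω j)) := by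
      apply Finset.filter_congr
      intro ω _
      constructor
      · rintro ⟨⟨⟨h1, h2⟩, h3⟩, h4⟩; exact ⟨h1, h2, h3, h4⟩
      · rintro ⟨h1, h2, h3, h4⟩; exact ⟨⟨⟨h1, h2⟩, h3⟩, h4⟩
    rw [hcong, lemG i j (fun q : Fin n × Fin n => q.1 ≠ i ∧ q.1 ≠ j ∧ q.2 ≠ i ∧ q.2 ≠ j)]
    rfl
  have hA : ((conjClass n lam).filter fun ω => ω i = i).card = cnt1 lam i i := rfl
  omega

lemma P1 (hij : i < j) :
    ((conjClass n lam).filter fun ω => ω j < ω i).card =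
      S1v lam i j + cnt2 lam i j j i + S3v lam i j + S4v lam i j + S2v lam i j + Sgv lam i j := by
  classical
  have hne : i ≠ j := ne_of_lt hij
  have h0 := card_filter_split (conjClass n lam) (fun ω => ω j < ω i) (fun ω => ω i = i)
  have hX1 : ((conjClass n lam).filter fun ω => ω j < ω i ∧ ω i = i).card = S1v lam i j := by
    have hcong : ((conjClass n lam).filter fun ω => ω j < ω i ∧ ω i = i)
        = ((conjClass n lam).filter fun ω => ω i = i ∧ (fun b => b < i) (ω j)) := by
      apply Finset.filter_congr
      intro ω _
      constructor
      · rintro ⟨h1, h2⟩; exact ⟨h2, h2 ▸ h1⟩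
      · rintro ⟨h1, h2⟩; exact ⟨h1.symm ▸ h2, h1⟩
    rw [hcong, lemA i j i (fun b => b < i)]
    rfl
  have hX2 := card_filter_split (conjClass n lam)
    (fun ω => ω j < ω i ∧ ¬ ω i = i) (fun ω => ω i = j)
  have hX5' := card_filter_split (conjClass n lam)
    (fun ω => ((ω j < ω i ∧ ¬ ω i = i) ∧ ω i = j)) (fun ω => ω j = i)
  have hX5 : ((conjClass n lam).filter fun ω => ((ω j < ω i ∧ ¬ ω i = i) ∧ ω i = j) ∧ ω j = i).card
      = cnt2 lam i j j i := by
    have hcong : ((conjClass n lam).filter fun ω => ((ω j < ω i ∧ ¬ ω i = i) ∧ ω i = j) ∧ ω j = i)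
        = ((conjClass n lam).filter fun ω => ω i = j ∧ ω j = i) := by
      apply Finset.filter_congr
      intro ω _
      constructor
      · rintro ⟨⟨_, h1⟩, h2⟩; exact ⟨h1, h2⟩
      · rintro ⟨h1, h2⟩
        exact ⟨⟨⟨by rw [h1, h2]; exact hij, fun hc => hne.symm (by rw [← hc, h1])⟩, h1⟩, h2⟩
    rw [hcong]
    rfl
  have hX6 : ((conjClass n lam).filter
        fun ω => ((ω j < ω i ∧ ¬ ω i = i) ∧ ω i = j) ∧ ¬ ω j = i).card
      = S3v lam i j := by
    have hcong : ((conjClass n lam).filter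
          fun ω => ((ω j < ω i ∧ ¬ ω i = i) ∧ ω i = j) ∧ ¬ ω j = i)
        = ((conjClass n lam).filter fun ω => ω i = j ∧ (fun b => b < j ∧ b ≠ i) (ω j)) := by
      apply Finset.filter_congr
      intro ω _
      constructor
      · rintro ⟨⟨⟨h1, _⟩, h2⟩, h3⟩; exact ⟨h2, h2 ▸ h1, h3⟩
      · rintro ⟨h1, h2, h3⟩
        exact ⟨⟨⟨h1.symm ▸ h2, fun hc => hne.symm (by rw [← hc, h1])⟩, h1⟩, h3⟩
    rw [hcong, lemA i j j (fun b => b < j ∧ b ≠ i)]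
    rfl
  have hX4 := card_filter_split (conjClass n lam)
    (fun ω => ((ω j < ω i ∧ ¬ ω i = i) ∧ ¬ ω i = j)) (fun ω => ω j = i)
  have hX7 : ((conjClass n lam).filter
        fun ω => ((ω j < ω i ∧ ¬ ω i = i) ∧ ¬ ω i = j) ∧ ω j = i).card
      = S4v lam i j := by
    have hcong : ((conjClass n lam).filter
          fun ω => ((ω j < ω i ∧ ¬ ω i = i) ∧ ¬ ω i = j) ∧ ω j = i)
        = ((conjClass n lam).filter fun ω => (fun a => i < a ∧ a ≠ j) (ω i) ∧ ω j = i) := by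
      apply Finset.filter_congr
      intro ω _
      constructor
      · rintro ⟨⟨⟨h1, _⟩, h2⟩, h3⟩; exact ⟨⟨h3 ▸ h1, h2⟩, h3⟩
      · rintro ⟨⟨h1, h2⟩, h3⟩
        exact ⟨⟨⟨h3.symm ▸ h1, (ne_of_gt h1)⟩, h2⟩, h3⟩
    rw [hcong, lemB i j i (fun a => i < a ∧ a ≠ j)]
    rfl
  have hX8 := card_filter_split (conjClass n lam)
    (fun ω => (((ω j < ω i ∧ ¬ ω i = i) ∧ ¬ ω i = j) ∧ ¬ ω j = i)) (fun ω => ω j = j)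
  have hX9 : ((conjClass n lam).filter
        fun ω => (((ω j < ω i ∧ ¬ ω i = i) ∧ ¬ ω i = j) ∧ ¬ ω j = i) ∧ ω j = j).card
      = S2v lam i j := by
    have hcong : ((conjClass n lam).filter
          fun ω => (((ω j < ω i ∧ ¬ ω i = i) ∧ ¬ ω i = j) ∧ ¬ ω j = i) ∧ ω j = j)
        = ((conjClass n lam).filter fun ω => (fun a => j < a) (ω i) ∧ ω j = j) := by
      apply Finset.filter_congr
      intro ω _
      constructor
      · rintro ⟨⟨⟨⟨h1, _⟩, _⟩, _⟩, h4⟩; exact ⟨h4 ▸ h1, h4⟩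
      · rintro ⟨h1, h2⟩
        refine ⟨⟨⟨⟨h2.symm ▸ h1, ne_of_gt (lt_trans hij h1)⟩, ne_of_gt h1⟩,
          fun hc => hne.symm (by rw [← hc, h2])⟩, h2⟩
    rw [hcong, lemB i j j (fun a => j < a)]
    rfl
  have hX10 : ((conjClass n lam).filter
        fun ω => (((ω j < ω i ∧ ¬ ω i = i) ∧ ¬ ω i = j) ∧ ¬ ω j = i) ∧ ¬ ω j = j).card
      = Sgv lam i j := by
    have hcong : ((conjClass n lam).filter
          fun ω => (((ω j < ω i ∧ ¬ ω i = i) ∧ ¬ ω i = j) ∧ ¬ ω j = i) ∧ ¬ ω j = j)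
        = ((conjClass n lam).filter fun ω =>
            (fun q : Fin n × Fin n => q.2 < q.1 ∧ q.1 ≠ i ∧ q.1 ≠ j ∧ q.2 ≠ i ∧ q.2 ≠ j)
              (ω i, ω j)) := by
      apply Finset.filter_congr
      intro ω _
      constructor
      · rintro ⟨⟨⟨⟨h1, h2⟩, h3⟩, h4⟩, h5⟩; exact ⟨h1, h2, h3, h4, h5⟩
      · rintro ⟨h1, h2, h3, h4, h5⟩; exact ⟨⟨⟨⟨h1, h2⟩, h3⟩, h4⟩, h5⟩
    rw [hcong, lemG i j
      (fun q : Fin n × Fin n => q.2 < q.1 ∧ q.1 ≠ i ∧ q.1 ≠ j ∧ q.2 ≠ i ∧ q.2 ≠ j)]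
    rfl
  omega

lemma P3 (hij : i < j) : Sg2v lam i j = Sgv lam i j + Sgv lam i j := by
  classical
  have hne : i ≠ j := ne_of_lt hij
  unfold Sg2v
  rw [← Finset.sum_filter_add_sum_filter_not
    ((univ ×ˢ univ).filter fun q : Fin n × Fin n => q.1 ≠ i ∧ q.1 ≠ j ∧ q.2 ≠ i ∧ q.2 ≠ j)
    (fun q => q.2 < q.1)]
  congr 1
  · rw [Finset.filter_filter]
    unfold Sgv
    congr 1
    apply Finset.filter_congr
    intro q _
    tauto
  · rw [← Finset.sum_filter_add_sum_filter_not
      (((univ ×ˢ univ).filter fun q : Fin n × Fin n => q.1 ≠ i ∧ q.1 ≠ j ∧ q.2 ≠ i ∧ q.2 ≠ j).filter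
        fun q => ¬ q.2 < q.1)
      (fun q => q.1 < q.2)]
    have hzero : ∑ q ∈ ((((univ ×ˢ univ).filter
          fun q : Fin n × Fin n => q.1 ≠ i ∧ q.1 ≠ j ∧ q.2 ≠ i ∧ q.2 ≠ j).filter
          fun q => ¬ q.2 < q.1).filter fun q => ¬ q.1 < q.2),
          cnt2 lam i j q.1 q.2 = 0 := by
      apply Finset.sum_eq_zero
      rintro ⟨a, b⟩ hq
      simp only [Finset.mem_filter] at hq
      have hab : a = b := le_antisymm (not_lt.1 hq.1.2) (not_lt.1 hq.2)
      subst hab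
      unfold cnt2
      rw [Finset.card_eq_zero, Finset.filter_eq_empty_iff]
      rintro ω _ ⟨h1, h2⟩
      exact hne (ω.injective (by rw [h1, h2]))
    rw [hzero, add_zero]
    have hsym : ∀ q : Fin n × Fin n, q.1 ≠ i → q.1 ≠ j → q.2 ≠ i → q.2 ≠ j → q.1 ≠ q.2 →
        cnt2 lam i j q.1 q.2 = cnt2 lam i j q.2 q.1 := by
      rintro ⟨a, b⟩ h1 h2 h3 h4 h5
      have hsi : Equiv.swap a b i = i := Equiv.swap_apply_of_ne_of_ne (Ne.symm h1) (Ne.symm h3)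
      have hsj : Equiv.swap a b j = j := Equiv.swap_apply_of_ne_of_ne (Ne.symm h2) (Ne.symm h4)
      have := cnt2_conj (lam := lam) (Equiv.swap a b) i j a b
      rwa [hsi, hsj, Equiv.swap_apply_left, Equiv.swap_apply_right] at this
    unfold Sgv
    refine Finset.sum_nbij' (fun q => (q.2, q.1)) (fun q => (q.2, q.1)) ?_ ?_ ?_ ?_ ?_
    · rintro ⟨a, b⟩ hq
      simp only [Finset.mem_filter, Finset.mem_product, Finset.mem_univ, true_and] at hq ⊢
      obtain ⟨⟨⟨g1, g2, g3, g4⟩, _⟩, hlt⟩ := hq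
      exact ⟨hlt, g3, g4, g1, g2⟩
    · rintro ⟨a, b⟩ hq
      simp only [Finset.mem_filter, Finset.mem_product, Finset.mem_univ, true_and] at hq ⊢
      obtain ⟨hlt, g1, g2, g3, g4⟩ := hq
      exact ⟨⟨⟨g3, g4, g1, g2⟩, not_lt.2 (le_of_lt hlt)⟩, hlt⟩
    · rintro ⟨a, b⟩ _; rfl
    · rintro ⟨a, b⟩ _; rfl
    · rintro ⟨a, b⟩ hq
      simp only [Finset.mem_filter, Finset.mem_product, Finset.mem_univ, true_and] at hq
      obtain ⟨⟨⟨g1, g2, g3, g4⟩, _⟩, hlt⟩ := hq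
      exact hsym (a, b) g1 g2 g3 g4 (ne_of_lt hlt)
end PerPair4

section RealPair

variable {a1 a2 : ℕ}

lemma perpair (hn : 3 ≤ n)
    (ha1 : a1 = Multiset.count 1 lam.parts) (ha2 : a2 = Multiset.count 2 lam.parts)
    {i j : Fin n} (hij : i < j) :
    2 * (n:ℝ) * ((n:ℝ) - 1) * ((n:ℝ) - 2)
        * ((((conjClass n lam).filter fun ω => ω j < ω i).card : ℕ) : ℝ)
      = ((conjClass n lam).card : ℝ) *
        (((n:ℝ) * ((n:ℝ) - 1) + 2 * (a2:ℝ) - (a1:ℝ) * ((a1:ℝ) - 1)) * ((n:ℝ) - 2)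
          + 2 * (((j:ℕ):ℝ) - ((i:ℕ):ℝ) - 1)
            * ((n:ℝ) - (n:ℝ) * (a1:ℝ) - (a1:ℝ) + (a1:ℝ)^2 - 2 * (a2:ℝ))) := by
  classical
  have hne : i ≠ j := ne_of_lt hij
  have hiltn : (i : ℕ) < n := i.isLt
  have hjltn : (j : ℕ) < n := j.isLt
  have hijv : (i : ℕ) < (j : ℕ) := hij
  -- cast helpers
  have c2 : ((n - 2 : ℕ) : ℝ) = (n:ℝ) - 2 := by
    rw [Nat.cast_sub (by omega)]; norm_num
  have cnj : ((n - 1 - (j:ℕ) : ℕ) : ℝ) = (n:ℝ) - 1 - ((j:ℕ):ℝ) := by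
    rw [Nat.cast_sub (by omega), Nat.cast_sub (by omega)]; norm_num
  have cj1 : (((j:ℕ) - 1 : ℕ) : ℝ) = ((j:ℕ):ℝ) - 1 := by
    rw [Nat.cast_sub (by omega)]; norm_num
  have cni : ((n - 2 - (i:ℕ) : ℕ) : ℝ) = (n:ℝ) - 2 - ((i:ℕ):ℝ) := by
    rw [Nat.cast_sub (by omega), Nat.cast_sub (by omega)]; norm_num
  have cnn : ((n * n - n : ℕ) : ℝ) = (n:ℝ) * (n:ℝ) - (n:ℝ) := by
    rw [Nat.cast_sub (Nat.le_mul_of_pos_left n (by omega))]; push_cast; ring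
  -- real versions of the counting identities
  have hg : (n:ℝ) * (cnt1 lam i i : ℝ) = (a1:ℝ) * ((conjClass n lam).card : ℝ) := by
    exact_mod_cast congrArg (fun k : ℕ => (k : ℝ)) (E14 (lam := lam) ha1 i)
  have hF : ((n:ℝ) * (n:ℝ) - (n:ℝ)) * (cnt2 lam i j i j : ℝ)
      = (a1:ℝ) * (a1:ℝ) * ((conjClass n lam).card : ℝ)
        - (a1:ℝ) * ((conjClass n lam).card : ℝ) := by
    have := congrArg (fun k : ℕ => (k : ℝ)) (E15 (lam := lam) ha1 hne)
    push_cast at this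
    rw [cnn] at this
    linarith
  have hS : ((n:ℝ) * (n:ℝ) - (n:ℝ)) * (cnt2 lam i j j i : ℝ)
      = 2 * (a2:ℝ) * ((conjClass n lam).card : ℝ) := by
    have := congrArg (fun k : ℕ => (k : ℝ)) (E16 (lam := lam) ha2 hne)
    push_cast at this
    rw [cnn] at this
    linarith
  have hh : ((n:ℝ) * (n:ℝ) - (n:ℝ)) * (cnt1 lam i j : ℝ)
      = (n:ℝ) * ((conjClass n lam).card : ℝ) - (a1:ℝ) * ((conjClass n lam).card : ℝ) := by
    have := congrArg (fun k : ℕ => (k : ℝ)) (E17 (lam := lam) ha1 hne)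
    push_cast at this
    rw [cnn] at this
    linarith
  have r4 : (cnt1 lam i i : ℝ) = (cnt2 lam i j i j : ℝ) + (T1v lam i j : ℝ) := by
    exact_mod_cast congrArg (fun k : ℕ => (k : ℝ)) (P4 (lam := lam) hne)
  have r5 : (cnt1 lam j j : ℝ) = (cnt2 lam i j i j : ℝ) + (T2v lam i j : ℝ) := by
    exact_mod_cast congrArg (fun k : ℕ => (k : ℝ)) (P5 (lam := lam) hne)
  have r6 : (cnt1 lam i j : ℝ) = (cnt2 lam i j j i : ℝ) + (T3v lam i j : ℝ) := by
    exact_mod_cast congrArg (fun k : ℕ => (k : ℝ)) (P6 (lam := lam) hne)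
  have r7 : (cnt1 lam j i : ℝ) = (cnt2 lam i j j i : ℝ) + (T4v lam i j : ℝ) := by
    exact_mod_cast congrArg (fun k : ℕ => (k : ℝ)) (P7 (lam := lam) hne)
  have r12 : (cnt1 lam j j : ℝ) = (cnt1 lam i i : ℝ) := by
    exact_mod_cast congrArg (fun k : ℕ => (k : ℝ)) (P12 (lam := lam) (i := i) (j := j))
  have r13 : (cnt1 lam j i : ℝ) = (cnt1 lam i j : ℝ) := by
    exact_mod_cast congrArg (fun k : ℕ => (k : ℝ)) (P13 (lam := lam) (i := i) (j := j))
  have r8 : (S1v lam i j : ℝ) * ((n:ℝ) - 2) = ((i:ℕ):ℝ) * (T1v lam i j : ℝ) := by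
    have := congrArg (fun k : ℕ => (k : ℝ)) (P8 (lam := lam) hij)
    push_cast at this
    rw [c2] at this
    linarith
  have r9 : (S2v lam i j : ℝ) * ((n:ℝ) - 2) = ((n:ℝ) - 1 - ((j:ℕ):ℝ)) * (T2v lam i j : ℝ) := by
    have := congrArg (fun k : ℕ => (k : ℝ)) (P9 (lam := lam) hij)
    push_cast at this
    rw [c2, cnj] at this
    linarith
  have r10 : (S3v lam i j : ℝ) * ((n:ℝ) - 2) = (((j:ℕ):ℝ) - 1) * (T3v lam i j : ℝ) := by
    have := congrArg (fun k : ℕ => (k : ℝ)) (P10 (lam := lam) hij)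
    push_cast at this
    rw [c2, cj1] at this
    linarith
  have r11 : (S4v lam i j : ℝ) * ((n:ℝ) - 2)
      = ((n:ℝ) - 2 - ((i:ℕ):ℝ)) * (T4v lam i j : ℝ) := by
    have := congrArg (fun k : ℕ => (k : ℝ)) (P11 (lam := lam) hij)
    push_cast at this
    rw [c2, cni] at this
    linarith
  have r2 : ((conjClass n lam).card : ℝ) = (cnt1 lam i i : ℝ) + (cnt1 lam i j : ℝ)
      + (T4v lam i j : ℝ) + (T2v lam i j : ℝ) + (Sg2v lam i j : ℝ) := by
    exact_mod_cast congrArg (fun k : ℕ => (k : ℝ)) (P2 (lam := lam) hne)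
  have r3 : (Sg2v lam i j : ℝ) = (Sgv lam i j : ℝ) + (Sgv lam i j : ℝ) := by
    exact_mod_cast congrArg (fun k : ℕ => (k : ℝ)) (P3 (lam := lam) hij)
  have r1 : ((((conjClass n lam).filter fun ω => ω j < ω i).card : ℕ) : ℝ)
      = (S1v lam i j : ℝ) + (cnt2 lam i j j i : ℝ) + (S3v lam i j : ℝ)
        + (S4v lam i j : ℝ) + (S2v lam i j : ℝ) + (Sgv lam i j : ℝ) := by
    exact_mod_cast congrArg (fun k : ℕ => (k : ℝ)) (P1 (lam := lam) hij)
  -- intermediate eliminations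
  have hT1 : (n:ℝ) * ((n:ℝ) - 1) * (T1v lam i j : ℝ)
      = (a1:ℝ) * ((n:ℝ) - (a1:ℝ)) * ((conjClass n lam).card : ℝ) := by
    linear_combination (-((n:ℝ)*((n:ℝ)-1)))*r4 + ((n:ℝ)-1)*hg - hF
  have hT2 : (n:ℝ) * ((n:ℝ) - 1) * (T2v lam i j : ℝ)
      = (a1:ℝ) * ((n:ℝ) - (a1:ℝ)) * ((conjClass n lam).card : ℝ) := by
    linear_combination (-((n:ℝ)*((n:ℝ)-1)))*r5 + ((n:ℝ)*((n:ℝ)-1))*r12 + ((n:ℝ)-1)*hg - hF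
  have hT3 : (n:ℝ) * ((n:ℝ) - 1) * (T3v lam i j : ℝ)
      = ((n:ℝ) - (a1:ℝ) - 2*(a2:ℝ)) * ((conjClass n lam).card : ℝ) := by
    linear_combination (-((n:ℝ)*((n:ℝ)-1)))*r6 + hh - hS
  have hT4 : (n:ℝ) * ((n:ℝ) - 1) * (T4v lam i j : ℝ)
      = ((n:ℝ) - (a1:ℝ) - 2*(a2:ℝ)) * ((conjClass n lam).card : ℝ) := by
    linear_combination (-((n:ℝ)*((n:ℝ)-1)))*r7 + ((n:ℝ)*((n:ℝ)-1))*r13 + hh - hS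
  have hS1 : (n:ℝ) * ((n:ℝ) - 1) * ((n:ℝ) - 2) * (S1v lam i j : ℝ)
      = ((i:ℕ):ℝ) * ((a1:ℝ) * ((n:ℝ) - (a1:ℝ)) * ((conjClass n lam).card : ℝ)) := by
    linear_combination ((n:ℝ)*((n:ℝ)-1))*r8 + ((i:ℕ):ℝ)*hT1
  have hS2 : (n:ℝ) * ((n:ℝ) - 1) * ((n:ℝ) - 2) * (S2v lam i j : ℝ)
      = ((n:ℝ) - 1 - ((j:ℕ):ℝ)) * ((a1:ℝ) * ((n:ℝ) - (a1:ℝ)) * ((conjClass n lam).card : ℝ)) := by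
    linear_combination ((n:ℝ)*((n:ℝ)-1))*r9 + ((n:ℝ) - 1 - ((j:ℕ):ℝ))*hT2
  have hS3 : (n:ℝ) * ((n:ℝ) - 1) * ((n:ℝ) - 2) * (S3v lam i j : ℝ)
      = (((j:ℕ):ℝ) - 1) * (((n:ℝ) - (a1:ℝ) - 2*(a2:ℝ)) * ((conjClass n lam).card : ℝ)) := by
    linear_combination ((n:ℝ)*((n:ℝ)-1))*r10 + (((j:ℕ):ℝ) - 1)*hT3
  have hS4 : (n:ℝ) * ((n:ℝ) - 1) * ((n:ℝ) - 2) * (S4v lam i j : ℝ)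
      = ((n:ℝ) - 2 - ((i:ℕ):ℝ)) * (((n:ℝ) - (a1:ℝ) - 2*(a2:ℝ)) * ((conjClass n lam).card : ℝ)) := by
    linear_combination ((n:ℝ)*((n:ℝ)-1))*r11 + ((n:ℝ) - 2 - ((i:ℕ):ℝ))*hT4
  have hSg : (n:ℝ) * ((n:ℝ) - 1) * (2 * (Sgv lam i j : ℝ))
      = ((n:ℝ)*((n:ℝ)-1) - ((n:ℝ)-1)*(a1:ℝ) - ((n:ℝ)-(a1:ℝ)) - ((n:ℝ)-(a1:ℝ)-2*(a2:ℝ))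
          - (a1:ℝ)*((n:ℝ)-(a1:ℝ))) * ((conjClass n lam).card : ℝ) := by
    linear_combination (-((n:ℝ)*((n:ℝ)-1)))*r2 + (-((n:ℝ)*((n:ℝ)-1)))*r3 + (-((n:ℝ)-1))*hg
      - hh - hT4 - hT2
  linear_combination (2*(n:ℝ)*((n:ℝ)-1)*((n:ℝ)-2))*r1 + 2*hS1 + 2*hS2 + 2*hS3 + 2*hS4
    + (2*((n:ℝ)-2))*hS + (((n:ℝ)-2))*hSg

end RealPair

theorem stmt3 (n : ℕ) (hn : 3 ≤ n) (lam : n.Partition) (a1 a2 : ℕ)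
    (ha1 : a1 = Multiset.count 1 lam.parts) (ha2 : a2 = Multiset.count 2 lam.parts)
    (wt : Fin n → Fin n → ℝ) (X : Equiv.Perm (Fin n) → ℝ)
    (hX : ∀ ω, X ω = ∑ p ∈ Finset.univ.filter (fun p : Fin n × Fin n => p.1 < p.2),
      wt p.1 p.2 * (if ω p.2 < ω p.1 then 1 else 0))
    (α β : ℝ)
    (hα : α = ∑ p ∈ Finset.univ.filter (fun p : Fin n × Fin n => p.1 < p.2), wt p.1 p.2)
    (hβ : β = ∑ p ∈ Finset.univ.filter (fun p : Fin n × Fin n => p.1 < p.2),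
      (((p.2 : ℕ) - (p.1 : ℕ) - 1 : ℕ) : ℝ) * wt p.1 p.2) :
    (∑ ω ∈ conjClass n lam, X ω) / ((conjClass n lam).card : ℝ)
      = (1 / 2 + (a2 : ℝ) / ((n : ℝ) * ((n : ℝ) - 1))
          - (a1 : ℝ) * ((a1 : ℝ) - 1) / (2 * (n : ℝ) * ((n : ℝ) - 1))) * α
        + (((n : ℝ) - (n : ℝ) * (a1 : ℝ) - (a1 : ℝ) + (a1 : ℝ) ^ 2 - 2 * (a2 : ℝ))
            / ((n : ℝ) * ((n : ℝ) - 1) * ((n : ℝ) - 2))) * β := by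
  classical
  have hm : 0 < (conjClass n lam).card := Finset.card_pos.2 (conjClass_nonempty (lam := lam))
  have hmR : ((conjClass n lam).card : ℝ) ≠ 0 := Nat.cast_ne_zero.2 hm.ne'
  have hn3 : (3:ℝ) ≤ (n:ℝ) := by exact_mod_cast hn
  have hne0 : (n:ℝ) ≠ 0 := by linarith
  have hne1 : (n:ℝ) - 1 ≠ 0 := by intro h; linarith
  have hne2 : (n:ℝ) - 2 ≠ 0 := by intro h; linarith
  set A : ℝ := 1 / 2 + (a2 : ℝ) / ((n : ℝ) * ((n : ℝ) - 1))
    - (a1 : ℝ) * ((a1 : ℝ) - 1) / (2 * (n : ℝ) * ((n : ℝ) - 1)) with hA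
  set B : ℝ := ((n : ℝ) - (n : ℝ) * (a1 : ℝ) - (a1 : ℝ) + (a1 : ℝ) ^ 2 - 2 * (a2 : ℝ))
    / ((n : ℝ) * ((n : ℝ) - 1) * ((n : ℝ) - 2)) with hB
  have key : ∀ p : Fin n × Fin n, p.1 < p.2 →
      ((((conjClass n lam).filter fun ω => ω p.2 < ω p.1).card : ℕ) : ℝ)
        = ((conjClass n lam).card : ℝ)
          * (A + B * ((((p.2 : ℕ) - (p.1 : ℕ) - 1 : ℕ)) : ℝ)) := by
    intro p hp
    have hper := perpair (lam := lam) hn ha1 ha2 hp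
    have hd : ((((p.2 : ℕ) - (p.1 : ℕ) - 1 : ℕ)) : ℝ)
        = (((p.2 : ℕ) : ℝ)) - (((p.1 : ℕ) : ℝ)) - 1 := by
      have h1 : (p.1 : ℕ) < (p.2 : ℕ) := hp
      rw [Nat.cast_sub (by omega), Nat.cast_sub (by omega)]
      norm_num
    have hc : (2 * (n:ℝ) * ((n:ℝ) - 1) * ((n:ℝ) - 2)) ≠ 0 := by
      apply mul_ne_zero (mul_ne_zero (mul_ne_zero (by norm_num) hne0) hne1) hne2
    apply mul_left_cancel₀ hc
    rw [hd]
    have h2 : (2 * (n:ℝ) * ((n:ℝ) - 1) * ((n:ℝ) - 2)) * (((conjClass n lam).card : ℝ)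
          * (A + B * ((((p.2 : ℕ) : ℝ)) - (((p.1 : ℕ) : ℝ)) - 1)))
        = ((conjClass n lam).card : ℝ) *
          (((n:ℝ) * ((n:ℝ) - 1) + 2 * (a2:ℝ) - (a1:ℝ) * ((a1:ℝ) - 1)) * ((n:ℝ) - 2)
            + 2 * (((p.2 : ℕ):ℝ) - ((p.1 : ℕ):ℝ) - 1)
              * ((n:ℝ) - (n:ℝ) * (a1:ℝ) - (a1:ℝ) + (a1:ℝ)^2 - 2 * (a2:ℝ))) := by
      rw [hA, hB]
      field_simp
    rw [h2]
    linear_combination hper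
  have hswap : ∑ ω ∈ conjClass n lam, X ω
      = ∑ p ∈ Finset.univ.filter (fun p : Fin n × Fin n => p.1 < p.2),
          wt p.1 p.2 * ((((conjClass n lam).filter fun ω => ω p.2 < ω p.1).card : ℕ) : ℝ) := by
    rw [Finset.sum_congr rfl (fun ω _ => hX ω), Finset.sum_comm]
    refine Finset.sum_congr rfl fun p _ => ?_
    rw [← Finset.mul_sum]
    congr 1
    rw [Finset.sum_boole]
  rw [hswap]
  have hsum2 : ∑ p ∈ Finset.univ.filter (fun p : Fin n × Fin n => p.1 < p.2),
        wt p.1 p.2 * ((((conjClass n lam).filter fun ω => ω p.2 < ω p.1).card : ℕ) : ℝ)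
      = ((conjClass n lam).card : ℝ)
        * ∑ p ∈ Finset.univ.filter (fun p : Fin n × Fin n => p.1 < p.2),
            wt p.1 p.2 * (A + B * ((((p.2 : ℕ) - (p.1 : ℕ) - 1 : ℕ)) : ℝ)) := by
    rw [Finset.mul_sum]
    refine Finset.sum_congr rfl fun p hp => ?_
    rw [key p (Finset.mem_filter.1 hp).2]
    ring
  rw [hsum2, mul_comm, mul_div_assoc, div_self hmR, mul_one]
  rw [hα, hβ, Finset.mul_sum, Finset.mul_sum, ← Finset.sum_add_distrib]
  refine Finset.sum_congr rfl fun p _ => ?_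
  ring
end
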